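/- arXiv:1907.04172 — 4 statements merged into one kernel-verified Lean document; each statement's English description precedes it below -/
import Mathlib

section
/- Let q, λ ∈ ℂ with |q| < 1, 0 < |λ| < 1 and 1 + λ² ≠ 0. Assume φ(λ,q²) ≠ 0 and (1+λ²) φ(λ,q²) ≠ λ²(1−q) φ(λ,q³). Then 1 / (1 − λ²(1−q) φ(λ,q³) / ((1+λ²) φ(λ,q²))) = (1+λ²)·(1 − (1+λ²) Σ_{k=0}^∞ (−iλ)^k/(1 − iλ q^k)) / (λ²(1−q)), the series on the right converging absolutely. -/
/-!
STATEMENT 15 (closed form of the limiting continued fraction, q-tangent case):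
`1/(1 - λ²(1-q)φ(λ,q³)/((1+λ²)φ(λ,q²)))
  = (1+λ²)(1 - (1+λ²) Σ_k (-iλ)^k/(1-iλq^k)) / (λ²(1-q))`.
-/

open Complex

/-- The `q`-Pochhammer symbol `(a;q)_k = ∏_{j=0}^{k-1} (1 - a q^j)`. -/
noncomputable def qPoch (a q : ℂ) (k : ℕ) : ℂ := ∏ j ∈ Finset.range k, (1 - a * q ^ j)

/-- `φ(λ,x) = Σ_k (-λ²;q²)_k x^k / ((q;q)_k (λ²q;q)_k) = ₂φ₁(iλ, -iλ; λ²q; q, x)`. -/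
noncomputable def phi (q lam x : ℂ) : ℂ :=
  ∑' k : ℕ, qPoch (-lam ^ 2) (q ^ 2) k * x ^ k / (qPoch q q k * qPoch (lam ^ 2 * q) q k)

set_option linter.unusedSectionVars false
set_option maxHeartbeats 1000000

namespace QT

lemma one_sub_ne {z : ℂ} (hz : ‖z‖ < 1) : 1 - z ≠ 0 := by
  intro h
  rw [sub_eq_zero] at h
  rw [← h] at hz; simp at hz

lemma norm_one_sub_le {z : ℂ} : ‖1 - z‖ ≤ 1 + ‖z‖ := by
  calc ‖1 - z‖ ≤ ‖(1:ℂ)‖ + ‖z‖ := norm_sub_le _ _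
  _ = 1 + ‖z‖ := by simp

lemma norm_one_sub_ge {z : ℂ} : 1 - ‖z‖ ≤ ‖1 - z‖ := by
  have := norm_sub_norm_le (1:ℂ) z
  simpa using this

lemma qPoch_ne_zero {b q : ℂ} (hb : ‖b‖ < 1) (hq : ‖q‖ ≤ 1) (n : ℕ) : qPoch b q n ≠ 0 := by
  refine Finset.prod_ne_zero_iff.mpr fun j _ => one_sub_ne ?_
  calc ‖b * q ^ j‖ = ‖b‖ * ‖q‖ ^ j := by rw [norm_mul, norm_pow]
  _ ≤ ‖b‖ * 1 := by
      refine mul_le_mul_of_nonneg_left (pow_le_one₀ (norm_nonneg q) hq) (norm_nonneg b)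
  _ < 1 := by simpa using hb

lemma qPoch_norm_le {b q : ℂ} (hb : ‖b‖ ≤ 1) (hq : ‖q‖ < 1) (n : ℕ) :
    ‖qPoch b q n‖ ≤ Real.exp (1 / (1 - ‖q‖)) := by
  have hq0 : (0:ℝ) ≤ ‖q‖ := norm_nonneg q
  calc ‖qPoch b q n‖ = ∏ j ∈ Finset.range n, ‖1 - b * q ^ j‖ := by
        rw [qPoch, norm_prod]
  _ ≤ ∏ j ∈ Finset.range n, Real.exp (‖q‖ ^ j) := by
        refine Finset.prod_le_prod (fun j _ => norm_nonneg _) (fun j _ => ?_)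
        calc ‖1 - b * q ^ j‖ ≤ 1 + ‖b * q ^ j‖ := norm_one_sub_le
        _ ≤ 1 + ‖q‖ ^ j := by
            rw [norm_mul, norm_pow]
            nlinarith [pow_nonneg hq0 j, norm_nonneg b]
        _ ≤ Real.exp (‖q‖ ^ j) := by
            have := Real.add_one_le_exp (‖q‖ ^ j); linarith
  _ = Real.exp (∑ j ∈ Finset.range n, ‖q‖ ^ j) := by rw [Real.exp_sum]
  _ ≤ Real.exp (1 / (1 - ‖q‖)) := by
        refine Real.exp_le_exp.mpr ?_
        have := Summable.sum_le_tsum (Finset.range n) (fun j _ => pow_nonneg hq0 j)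
          (summable_geometric_of_lt_one hq0 hq)
        rw [tsum_geometric_of_lt_one hq0 hq] at this
        rw [one_div]; exact this

lemma aux_exp_le {t s : ℝ} (ht : 0 ≤ t) (hts : t ≤ s) (hs : s < 1) :
    Real.exp (-(t / (1 - s))) ≤ 1 - t := by
  have h1 : (0:ℝ) < 1 - s := by linarith
  have h2 : (0:ℝ) < 1 - t := by linarith
  have e1 : t / (1 - t) ≤ t / (1 - s) := by
    rw [div_le_div_iff₀ h2 h1]; nlinarith
  have e2 : (1:ℝ) / (1 - t) = 1 + t / (1 - t) := by field_simp; ring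
  have e3 : 1 / (1 - t) ≤ Real.exp (t / (1 - t)) := by
    have := Real.add_one_le_exp (t / (1 - t)); linarith
  calc Real.exp (-(t / (1 - s))) ≤ Real.exp (-(t / (1 - t))) :=
        Real.exp_le_exp.mpr (by linarith)
  _ = (Real.exp (t / (1 - t)))⁻¹ := Real.exp_neg _
  _ ≤ (1 / (1 - t))⁻¹ := by
        apply inv_anti₀ (by positivity) e3
  _ = 1 - t := by field_simp

lemma qPoch_norm_ge {b q : ℂ} (hb : ‖b‖ ≤ ‖q‖) (hq : ‖q‖ < 1) (n : ℕ) :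
    Real.exp (-(‖q‖ / (1 - ‖q‖) ^ 2)) ≤ ‖qPoch b q n‖ := by
  have hq0 : (0:ℝ) ≤ ‖q‖ := norm_nonneg q
  have h1 : (0:ℝ) < 1 - ‖q‖ := by linarith
  calc Real.exp (-(‖q‖ / (1 - ‖q‖) ^ 2))
      ≤ Real.exp (-∑ j ∈ Finset.range n, ‖q‖ ^ (j+1) / (1 - ‖q‖)) := by
        refine Real.exp_le_exp.mpr (neg_le_neg ?_)
        have h2 : ∑ j ∈ Finset.range n, ‖q‖ ^ (j+1) / (1-‖q‖)
            = (∑ j ∈ Finset.range n, ‖q‖ ^ (j+1)) / (1-‖q‖) := by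
          rw [Finset.sum_div]
        have h3 : ∀ j : ℕ, ‖q‖ ^ (j+1) / (1-‖q‖) = (‖q‖/(1-‖q‖)) * ‖q‖ ^ j := by
          intro j; rw [pow_succ]; field_simp
        have h4 : ∑ j ∈ Finset.range n, ‖q‖ ^ j ≤ (1 - ‖q‖)⁻¹ := by
          have := Summable.sum_le_tsum (Finset.range n) (fun j _ => pow_nonneg hq0 j)
            (summable_geometric_of_lt_one hq0 hq)
          rwa [tsum_geometric_of_lt_one hq0 hq] at this
        calc ∑ j ∈ Finset.range n, ‖q‖ ^ (j+1) / (1-‖q‖)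
            = (‖q‖/(1-‖q‖)) * ∑ j ∈ Finset.range n, ‖q‖ ^ j := by
              rw [Finset.mul_sum]; exact Finset.sum_congr rfl (fun j _ => h3 j)
        _ ≤ (‖q‖/(1-‖q‖)) * (1-‖q‖)⁻¹ :=
              mul_le_mul_of_nonneg_left h4 (by positivity)
        _ = ‖q‖ / (1-‖q‖)^2 := by field_simp
  _ = ∏ j ∈ Finset.range n, Real.exp (-(‖q‖ ^ (j+1) / (1 - ‖q‖))) := by
        rw [← Real.exp_sum, ← Finset.sum_neg_distrib]
  _ ≤ ∏ j ∈ Finset.range n, ‖1 - b * q ^ j‖ := by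
        refine Finset.prod_le_prod (fun j _ => (Real.exp_pos _).le) (fun j _ => ?_)
        have hbq : ‖b * q ^ j‖ ≤ ‖q‖ ^ (j+1) := by
          rw [norm_mul, norm_pow, pow_succ]
          calc ‖b‖ * ‖q‖^j ≤ ‖q‖ * ‖q‖^j := by nlinarith [pow_nonneg hq0 j]
          _ = ‖q‖^j * ‖q‖ := by ring
        calc Real.exp (-(‖q‖^(j+1)/(1-‖q‖))) ≤ 1 - ‖q‖^(j+1) :=
              aux_exp_le (by positivity) (pow_le_of_le_one hq0 hq.le (by omega)) hq
        _ ≤ 1 - ‖b * q ^ j‖ := by linarith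
        _ ≤ ‖1 - b * q ^ j‖ := norm_one_sub_ge
  _ = ‖qPoch b q n‖ := by rw [qPoch, norm_prod]


noncomputable def dd (q a : ℂ) (n : ℕ) : ℂ := qPoch a q n / qPoch q q n

noncomputable def hh (q a w : ℂ) : ℂ := ∑' n : ℕ, dd q a n * w ^ n

noncomputable def CB (q : ℂ) : ℝ := Real.exp (1 / (1 - ‖q‖)) / Real.exp (-(‖q‖ / (1 - ‖q‖) ^ 2))

lemma CB_pos {q : ℂ} : 0 < CB q := by
  unfold CB; positivity

lemma dd_norm_le {q a : ℂ} (ha : ‖a‖ ≤ 1) (hq : ‖q‖ < 1) (n : ℕ) : ‖dd q a n‖ ≤ CB q := by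
  rw [dd, norm_div, CB]
  exact div_le_div₀ (Real.exp_pos _).le (qPoch_norm_le ha hq n) (Real.exp_pos _)
    (qPoch_norm_ge le_rfl hq n)

lemma qPoch_succ (b q : ℂ) (n : ℕ) : qPoch b q (n+1) = qPoch b q n * (1 - b * q ^ n) :=
  Finset.prod_range_succ _ _

lemma qPoch_succ' (b q : ℂ) (n : ℕ) : qPoch b q (n+1) = (1 - b) * qPoch (b*q) q n := by
  rw [qPoch, Finset.prod_range_succ']
  simp only [pow_zero, mul_one, qPoch]
  rw [mul_comm]
  congr 1
  exact Finset.prod_congr rfl (fun j _ => by ring_nf)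

/-- telescoping: `(bq;q)_m (1-b) = (b;q)_m (1-b q^m)` -/
lemma qPoch_telescope (b q : ℂ) (m : ℕ) :
    qPoch (b*q) q m * (1 - b) = qPoch b q m * (1 - b * q ^ m) := by
  rw [mul_comm, ← qPoch_succ', qPoch_succ]

lemma summable_of_geom_bound {f : ℕ → ℂ} {C r : ℝ} (hr0 : 0 ≤ r) (hr : r < 1)
    (h : ∀ n, ‖f n‖ ≤ C * r ^ n) : Summable f :=
  Summable.of_norm_bounded ((summable_geometric_of_lt_one hr0 hr).mul_left C) h

lemma summable_hh {q a w : ℂ} (ha : ‖a‖ ≤ 1) (hq : ‖q‖ < 1) (hw : ‖w‖ < 1) :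
    Summable (fun n : ℕ => dd q a n * w ^ n) := by
  refine summable_of_geom_bound (C := CB q) (norm_nonneg w) hw (fun n => ?_)
  rw [norm_mul, norm_pow]
  exact mul_le_mul_of_nonneg_right (dd_norm_le ha hq n) (by positivity)

lemma dd_rec {q a : ℂ} (hq : ‖q‖ < 1) (n : ℕ) :
    dd q a (n+1) * (1 - q ^ (n+1)) = dd q a n * (1 - a * q ^ n) := by
  have h1 : qPoch q q (n+1) = qPoch q q n * (1 - q ^ (n+1)) := by
    rw [qPoch_succ]; ring_nf
  have h2 := qPoch_succ a q n
  have hqn : ∀ m : ℕ, qPoch q q m ≠ 0 := qPoch_ne_zero hq hq.le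
  have hfac : (1:ℂ) - q ^ (n+1) ≠ 0 := by
    apply one_sub_ne
    rw [norm_pow]
    exact pow_lt_one₀ (norm_nonneg q) hq (by omega)
  have hA := hqn n
  rw [dd, dd, h1, h2]
  field_simp

/-- functional equation `(1-w) h(w) = (1-aw) h(qw)` -/
lemma hh_fe {q a w : ℂ} (ha : ‖a‖ ≤ 1) (hq : ‖q‖ < 1) (hw : ‖w‖ < 1) :
    (1 - w) * hh q a w = (1 - a * w) * hh q a (q * w) := by
  have hqw : ‖q * w‖ < 1 := by
    rw [norm_mul]
    nlinarith [norm_nonneg q, norm_nonneg w]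
  have S1 : Summable (fun n : ℕ => dd q a n * w ^ n) := summable_hh ha hq hw
  have S2 : Summable (fun n : ℕ => dd q a n * (q*w) ^ n) := summable_hh ha hq hqw
  have A1 : Summable (fun n : ℕ => dd q a (n+1) * w ^ (n+1)) :=
    S1.comp_injective (add_left_injective 1)
  have A2 : Summable (fun n : ℕ => dd q a (n+1) * (q*w) ^ (n+1)) :=
    S2.comp_injective (add_left_injective 1)
  have B1 : Summable (fun n : ℕ => dd q a n * w ^ (n+1)) := by
    have e : (fun n : ℕ => dd q a n * w ^ (n+1)) = fun n => (dd q a n * w ^ n) * w := by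
      funext n; ring
    rw [e]; exact S1.mul_right w
  have B2 : Summable (fun n : ℕ => a * w * (dd q a n * (q*w) ^ n)) := S2.mul_left _
  have d0 : dd q a 0 = 1 := by simp [dd, qPoch]
  have key : ∀ n : ℕ, dd q a (n+1) * w ^ (n+1) - dd q a n * w ^ (n+1)
      = dd q a (n+1) * (q*w) ^ (n+1) - a * w * (dd q a n * (q*w) ^ n) := by
    intro n
    have h := dd_rec (a := a) (q := q) hq n
    have e1 : (q*w) ^ (n+1) = q ^ (n+1) * w ^ (n+1) := mul_pow _ _ _
    have e2 : (q*w) ^ n = q ^ n * w ^ n := mul_pow _ _ _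
    have e4 : w ^ (n+1) = w ^ n * w := pow_succ _ _
    rw [e1, e2, e4]
    linear_combination (w ^ n * w) * h
  have lhs : (1 - w) * hh q a w
      = 1 + ∑' n : ℕ, (dd q a (n+1) * w ^ (n+1) - dd q a n * w ^ (n+1)) := by
    have c1 : hh q a w = 1 + ∑' n : ℕ, dd q a (n+1) * w ^ (n+1) := by
      rw [hh, Summable.tsum_eq_zero_add S1, d0, pow_zero, mul_one]
    have c2 : w * hh q a w = ∑' n : ℕ, dd q a n * w ^ (n+1) := by
      rw [hh, ← tsum_mul_left]
      exact tsum_congr fun n => by ring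
    rw [sub_mul, one_mul, c2, c1, Summable.tsum_sub A1 B1]
    ring
  have rhs : (1 - a * w) * hh q a (q*w)
      = 1 + ∑' n : ℕ, (dd q a (n+1) * (q*w) ^ (n+1) - a * w * (dd q a n * (q*w) ^ n)) := by
    have c1 : hh q a (q*w) = 1 + ∑' n : ℕ, dd q a (n+1) * (q*w) ^ (n+1) := by
      rw [hh, Summable.tsum_eq_zero_add S2, d0, pow_zero, mul_one]
    have c2 : a * w * hh q a (q*w) = ∑' n : ℕ, a * w * (dd q a n * (q*w) ^ n) := by
      rw [hh, ← tsum_mul_left]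
    rw [sub_mul, one_mul, c2, c1, Summable.tsum_sub A2 B2]
    ring
  rw [lhs, rhs]
  congr 1
  exact tsum_congr key



section
variable {q a : ℂ} (hq : ‖q‖ < 1) (ha : ‖a‖ < 1)

include hq ha

lemma norm_aqn_lt (n : ℕ) : ‖a * q ^ n‖ < 1 := by
  rw [norm_mul, norm_pow]
  have h1 : ‖q‖ ^ n ≤ 1 := pow_le_one₀ (norm_nonneg q) hq.le
  nlinarith [norm_nonneg a, pow_nonneg (norm_nonneg q) n]

lemma iterG (n : ℕ) : hh q (a*q) (-a) * qPoch (-a) q n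
    = qPoch (-(a^2*q)) q n * hh q (a*q) (-(a*q^n)) := by
  induction n with
  | zero => simp [qPoch]
  | succ n ih =>
    have haq : ‖a*q‖ ≤ 1 := by
      have := norm_aqn_lt hq ha 1
      simpa using this.le
    have hw : ‖(-(a*q^n) : ℂ)‖ < 1 := by
      rw [norm_neg]; exact norm_aqn_lt hq ha n
    have fe := hh_fe (a := a*q) (w := -(a*q^n)) haq hq hw
    have e1 : (1 : ℂ) - -(a*q^n) = 1 - (-a) * q^n := by ring
    have e2 : (1 : ℂ) - (a*q) * -(a*q^n) = 1 - (-(a^2*q)) * q^n := by ring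
    have e3 : q * -(a*q^n) = -(a*q^(n+1)) := by ring
    rw [e1, e2, e3] at fe
    rw [qPoch_succ, qPoch_succ, ← mul_assoc, ih]
    linear_combination qPoch (-(a^2*q)) q n * fe

lemma iterH (m : ℕ) : hh q a (q^2) * qPoch (q^2) q m
    = qPoch (a*q^2) q m * hh q a (q^(m+2)) := by
  induction m with
  | zero => simp [qPoch]
  | succ m ih =>
    have hw : ‖(q^(m+2) : ℂ)‖ < 1 := by
      rw [norm_pow]; exact pow_lt_one₀ (norm_nonneg q) hq (by omega)
    have fe := hh_fe (a := a) (w := q^(m+2)) ha.le hq hw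
    have e1 : (1 : ℂ) - q^(m+2) = 1 - q^2 * q^m := by ring
    have e2 : (1 : ℂ) - a * q^(m+2) = 1 - (a*q^2) * q^m := by ring
    have e3 : q * q^(m+2) = q^(m+1+2) := by ring
    rw [e1, e2, e3] at fe
    rw [qPoch_succ, qPoch_succ, ← mul_assoc, ih]
    linear_combination qPoch (a*q^2) q m * fe

lemma heine_core {z : ℂ} (hz : ‖z‖ < 1) :
    hh q (a*q) (-a) * (∑' n : ℕ, dd q a n * qPoch (-a) q n / qPoch (-(a^2*q)) q n * z^n)
    = ∑' m : ℕ, dd q (a*q) m * (-a)^m * hh q a (z * q^m) := by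
  have haq : ‖a*q‖ ≤ 1 := by
    have := norm_aqn_lt hq ha 1
    simpa using this.le
  have hne : ∀ n, qPoch (-(a^2*q)) q n ≠ 0 := by
    intro n
    apply qPoch_ne_zero _ hq.le
    rw [norm_neg, norm_mul, norm_pow]
    nlinarith [norm_nonneg a, norm_nonneg q]
  have hFsum : Summable (Function.uncurry
      (fun n m : ℕ => dd q a n * dd q (a*q) m * (-a)^m * z^n * q^(n*m))) := by
    apply Summable.of_norm_bounded (g := fun p : ℕ×ℕ => (CB q * CB q) * (‖z‖^p.1 * ‖a‖^p.2))
    · apply Summable.mul_left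
      exact (summable_geometric_of_lt_one (norm_nonneg z) hz).mul_of_nonneg
        (summable_geometric_of_lt_one (norm_nonneg a) ha)
        (fun n => pow_nonneg (norm_nonneg z) n) (fun m => pow_nonneg (norm_nonneg a) m)
    · intro p
      have b1 := dd_norm_le ha.le hq p.1
      have b2 := dd_norm_le haq hq p.2
      have b3 : ‖q‖^(p.1*p.2) ≤ 1 := pow_le_one₀ (norm_nonneg q) hq.le
      have e : ‖Function.uncurry
          (fun n m : ℕ => dd q a n * dd q (a*q) m * (-a)^m * z^n * q^(n*m)) p‖
          = ‖dd q a p.1‖ * ‖dd q (a*q) p.2‖ * ‖a‖^p.2 * ‖z‖^p.1 * ‖q‖^(p.1*p.2) := by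
        simp [Function.uncurry, norm_mul, norm_pow]
      rw [e]
      have c1 : ‖dd q a p.1‖ * ‖dd q (a*q) p.2‖ ≤ CB q * CB q :=
        mul_le_mul b1 b2 (norm_nonneg _) CB_pos.le
      have c2 : ‖a‖^p.2 * ‖z‖^p.1 * ‖q‖^(p.1*p.2) ≤ ‖z‖^p.1 * ‖a‖^p.2 := by
        have hx : (0:ℝ) ≤ ‖a‖^p.2 * ‖z‖^p.1 := by positivity
        nlinarith [pow_nonneg (norm_nonneg q) (p.1*p.2)]
      calc ‖dd q a p.1‖ * ‖dd q (a*q) p.2‖ * ‖a‖^p.2 * ‖z‖^p.1 * ‖q‖^(p.1*p.2)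
          = (‖dd q a p.1‖ * ‖dd q (a*q) p.2‖) * (‖a‖^p.2 * ‖z‖^p.1 * ‖q‖^(p.1*p.2)) := by
            ring
      _ ≤ (CB q * CB q) * (‖z‖^p.1 * ‖a‖^p.2) :=
            mul_le_mul c1 c2 (by positivity) (mul_nonneg CB_pos.le CB_pos.le)
  have step2 : ∑' n : ℕ, ∑' m : ℕ, dd q a n * dd q (a*q) m * (-a)^m * z^n * q^(n*m)
      = ∑' m : ℕ, ∑' n : ℕ, dd q a n * dd q (a*q) m * (-a)^m * z^n * q^(n*m) :=
    (Summable.tsum_comm' hFsum hFsum.prod_factor hFsum.prod_symm.prod_factor).symm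
  have step1 : hh q (a*q) (-a) * (∑' n : ℕ, dd q a n * qPoch (-a) q n / qPoch (-(a^2*q)) q n * z^n)
      = ∑' n : ℕ, ∑' m : ℕ, dd q a n * dd q (a*q) m * (-a)^m * z^n * q^(n*m) := by
    rw [← tsum_mul_left]
    refine tsum_congr fun n => ?_
    have e : hh q (a*q) (-a) * (dd q a n * qPoch (-a) q n / qPoch (-(a^2*q)) q n * z^n)
        = dd q a n * z^n * hh q (a*q) (-(a*q^n)) := by
      rw [div_mul_eq_mul_div, mul_div_assoc']
      rw [show hh q (a*q) (-a) * (dd q a n * qPoch (-a) q n * z^n)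
          = dd q a n * z^n * (hh q (a*q) (-a) * qPoch (-a) q n) by ring]
      rw [iterG hq ha n]
      field_simp [hne n]
    rw [e, hh, ← tsum_mul_left]
    refine tsum_congr fun m => ?_
    have e2 : (-(a*q^n))^m = (-a)^m * q^(n*m) := by
      rw [show (-(a*q^n) : ℂ) = (-a) * q^n by ring, mul_pow, ← pow_mul]
    rw [e2]
    ring
  have step3 : ∀ m : ℕ, ∑' n : ℕ, dd q a n * dd q (a*q) m * (-a)^m * z^n * q^(n*m)
      = dd q (a*q) m * (-a)^m * hh q a (z * q^m) := by
    intro m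
    rw [hh, ← tsum_mul_left]
    refine tsum_congr fun n => ?_
    rw [mul_pow, ← pow_mul]
    ring
  rw [step1, step2]
  exact tsum_congr step3

end


section
variable {q a lam : ℂ} (hq : ‖q‖ < 1) (ha : ‖a‖ < 1)

include hq

lemma qPow_lt (s : ℕ) (hs : s ≠ 0) : ‖(q : ℂ)^s‖ < 1 := by
  rw [norm_pow]; exact pow_lt_one₀ (norm_nonneg q) hq hs

include ha

lemma phi_eq (ha2 : lam^2 = -(a^2)) (z : ℂ) :
    phi q lam z = ∑' n : ℕ, dd q a n * qPoch (-a) q n / qPoch (-(a^2*q)) q n * z^n := by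
  rw [phi]
  refine tsum_congr fun n => ?_
  have prodsplit : qPoch (-lam^2) (q^2) n = qPoch a q n * qPoch (-a) q n := by
    rw [qPoch, qPoch, qPoch, ← Finset.prod_mul_distrib]
    refine Finset.prod_congr rfl fun j _ => ?_
    rw [show (-lam^2 : ℂ) = a^2 by linear_combination -ha2]
    ring
  have lam2q : lam^2*q = -(a^2*q) := by linear_combination q * ha2
  have hPq : qPoch q q n ≠ 0 := qPoch_ne_zero hq hq.le n
  have hne : qPoch (-(a^2*q)) q n ≠ 0 := by
    apply qPoch_ne_zero _ hq.le
    rw [norm_neg, norm_mul, norm_pow]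
    nlinarith [norm_nonneg a, norm_nonneg q, sq_nonneg ‖a‖]
  rw [prodsplit, lam2q, dd]
  field_simp
  try ring

omit ha

lemma hh_ne_zero_small {b w : ℂ} (hb : ‖b‖ ≤ 1) (hw : ‖w‖ < 1)
    (hsm : (CB q * ‖w‖) * (1-‖w‖)⁻¹ < 1) : hh q b w ≠ 0 := by
  intro h0
  have S : Summable (fun m : ℕ => dd q b m * w^m) := summable_hh hb hq hw
  have d0 : dd q b 0 = 1 := by simp [dd, qPoch]
  have c1 : (0:ℂ) = 1 + ∑' m : ℕ, dd q b (m+1) * w^(m+1) := by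
    rw [← h0, hh, Summable.tsum_eq_zero_add S, d0, pow_zero, mul_one]
  have bound : ∀ m : ℕ, ‖dd q b (m+1) * w^(m+1)‖ ≤ (CB q * ‖w‖) * ‖w‖^m := by
    intro m
    rw [norm_mul, norm_pow, pow_succ]
    have hd := dd_norm_le hb hq (m+1)
    calc ‖dd q b (m+1)‖ * (‖w‖^m * ‖w‖) ≤ CB q * (‖w‖^m * ‖w‖) :=
          mul_le_mul_of_nonneg_right hd (by positivity)
    _ = (CB q * ‖w‖) * ‖w‖^m := by ring
  have Sgeom : Summable (fun m : ℕ => (CB q * ‖w‖) * ‖w‖^m) :=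
    (summable_geometric_of_lt_one (norm_nonneg w) hw).mul_left _
  have Snorm : Summable (fun m : ℕ => ‖dd q b (m+1) * w^(m+1)‖) :=
    Summable.of_nonneg_of_le (fun m => norm_nonneg _) bound Sgeom
  have htail : ‖∑' m : ℕ, dd q b (m+1) * w^(m+1)‖ ≤ (CB q * ‖w‖) * (1-‖w‖)⁻¹ := by
    calc ‖∑' m : ℕ, dd q b (m+1) * w^(m+1)‖
        ≤ ∑' m : ℕ, ‖dd q b (m+1) * w^(m+1)‖ := norm_tsum_le_tsum_norm Snorm
    _ ≤ ∑' m : ℕ, (CB q * ‖w‖) * ‖w‖^m := Summable.tsum_le_tsum bound Snorm Sgeom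
    _ = (CB q * ‖w‖) * (1-‖w‖)⁻¹ := by
        rw [tsum_mul_left, tsum_geometric_of_lt_one (norm_nonneg w) hw]
  have hone : ‖∑' m : ℕ, dd q b (m+1) * w^(m+1)‖ = 1 := by
    have e : ∑' m : ℕ, dd q b (m+1) * w^(m+1) = -1 := by linear_combination -c1
    rw [e]; simp
  rw [hone] at htail
  linarith

include ha

lemma g_ne_zero : hh q (a*q) (-a) ≠ 0 := by
  intro h0
  have haq : ‖a*q‖ ≤ 1 := by
    have := norm_aqn_lt hq ha 1
    simpa using this.le
  have hzero : ∀ n : ℕ, hh q (a*q) (-(a*q^n)) = 0 := by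
    intro n
    have hne : qPoch (-(a^2*q)) q n ≠ 0 := by
      apply qPoch_ne_zero _ hq.le
      rw [norm_neg, norm_mul, norm_pow]
      nlinarith [norm_nonneg a, norm_nonneg q, sq_nonneg ‖a‖]
    have h2 := iterG hq ha n
    rw [h0, zero_mul] at h2
    exact (mul_eq_zero.mp h2.symm).resolve_left hne
  obtain ⟨n, hn⟩ : ∃ n : ℕ, CB q * (‖a‖ * ‖q‖^n) < (1 - ‖a‖) / 2 := by
    have htend : Filter.Tendsto (fun n : ℕ => CB q * (‖a‖ * ‖q‖^n)) Filter.atTop (nhds 0) := by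
      have h1 := tendsto_pow_atTop_nhds_zero_of_lt_one (norm_nonneg q) hq
      have h2 := (h1.const_mul ‖a‖).const_mul (CB q)
      simpa [mul_assoc] using h2
    have hpos : (0:ℝ) < (1 - ‖a‖) / 2 := by linarith
    exact (htend.eventually_lt_const hpos).exists
  have hwn : ‖(-(a*q^n) : ℂ)‖ = ‖a‖ * ‖q‖^n := by rw [norm_neg, norm_mul, norm_pow]
  have hwa : ‖(-(a*q^n) : ℂ)‖ ≤ ‖a‖ := by
    rw [hwn]
    nlinarith [pow_le_one₀ (norm_nonneg q) hq.le (n := n), norm_nonneg a,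
      pow_nonneg (norm_nonneg q) n]
  have hwlt : ‖(-(a*q^n) : ℂ)‖ < 1 := lt_of_le_of_lt hwa ha
  refine hh_ne_zero_small hq haq hwlt ?_ (hzero n)
  have h5 : (1-‖(-(a*q^n) : ℂ)‖)⁻¹ ≤ (1-‖a‖)⁻¹ :=
    inv_anti₀ (by linarith) (by linarith)
  have h7 : (0:ℝ) ≤ CB q * ‖(-(a*q^n) : ℂ)‖ := mul_nonneg CB_pos.le (norm_nonneg _)
  have h4 : CB q * ‖(-(a*q^n) : ℂ)‖ < (1-‖a‖)/2 := by rw [hwn]; exact hn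
  have h6 : (0:ℝ) < (1-‖a‖)⁻¹ := inv_pos.mpr (by linarith)
  calc (CB q * ‖(-(a*q^n) : ℂ)‖) * (1-‖(-(a*q^n) : ℂ)‖)⁻¹
      ≤ (CB q * ‖(-(a*q^n) : ℂ)‖) * (1-‖a‖)⁻¹ := mul_le_mul_of_nonneg_left h5 h7
  _ < ((1-‖a‖)/2) * (1-‖a‖)⁻¹ := mul_lt_mul_of_pos_right h4 h6
  _ ≤ 1 := by
      have hne : (1:ℝ) - ‖a‖ ≠ 0 := ne_of_gt (by linarith)
      have e : ((1-‖a‖)/2) * (1-‖a‖)⁻¹ = (1-‖a‖) * (1-‖a‖)⁻¹ / 2 := by ring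
      rw [e, mul_inv_cancel₀ hne]; norm_num

end

section
variable {q a lam : ℂ} (hq : ‖q‖ < 1) (ha : ‖a‖ < 1)

lemma tele_q (m : ℕ) : qPoch (q^2) q m * (1-q) = qPoch q q m * (1 - q^(m+1)) := by
  have h := qPoch_telescope q q m
  rw [show (q*q : ℂ) = q^2 by ring, show (q*q^m : ℂ) = q^(m+1) by ring] at h
  exact h

lemma tele_aq (m : ℕ) : qPoch (a*q^2) q m * (1-a*q) = qPoch (a*q) q m * (1 - a*q^(m+1)) := by
  have h := qPoch_telescope (a*q) q m
  rw [show (a*q*q : ℂ) = a*q^2 by ring, show (a*q*q^m : ℂ) = a*q^(m+1) by ring] at h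
  exact h

include hq ha

lemma hfac_ne (m : ℕ) : (1:ℂ) - a*q^(m+1) ≠ 0 := one_sub_ne (norm_aqn_lt hq ha (m+1))

lemma hPaq2_ne (m : ℕ) : qPoch (a*q^2) q m ≠ 0 := by
  apply qPoch_ne_zero _ hq.le
  have := norm_aqn_lt hq ha 2
  simpa using this

lemma term2 (m : ℕ) : (1-q) * (dd q (a*q) m * (-a)^m * hh q a (q^(m+2)))
    = ((1-a*q) * hh q a (q^2)) * ((-a)^m * ((1 - q^(m+1)) / (1 - a*q^(m+1)))) := by
  have hPq : qPoch q q m ≠ 0 := qPoch_ne_zero hq hq.le m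
  have hP2 : qPoch (a*q^2) q m ≠ 0 := hPaq2_ne hq ha m
  have hf : (1:ℂ) - a*q^(m+1) ≠ 0 := hfac_ne hq ha m
  have hIH := iterH hq ha m
  have t1 := tele_q (q := q) m
  have t2 := tele_aq (q := q) (a := a) m
  rw [dd]
  field_simp
  rw [mul_comm q a]
  linear_combination (-((1-q) * (-a)^m * hh q a (q^(m+2)))) * t2
    + (-((1-a*q) * (1-q) * (-a)^m)) * hIH
    + ((1-a*q) * (-a)^m * hh q a (q^2)) * t1

lemma term3 (m : ℕ) : (1-q) * (dd q (a*q) m * (-a)^m * hh q a (q^(m+3)))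
    = ((1-a*q) * hh q a (q^2)) *
      ((-a)^m * (((1-q^(m+1))*(1-q^(m+2))) / ((1-a*q^(m+1))*(1-a*q^(m+2))))) := by
  have hPq : qPoch q q m ≠ 0 := qPoch_ne_zero hq hq.le m
  have hP2 : qPoch (a*q^2) q m ≠ 0 := hPaq2_ne hq ha m
  have hf1 : (1:ℂ) - a*q^(m+1) ≠ 0 := hfac_ne hq ha m
  have hf2 : (1:ℂ) - a*q^(m+2) ≠ 0 := hfac_ne hq ha (m+1)
  have hIH1 := iterH hq ha (m+1)
  rw [qPoch_succ (q^2) q m, qPoch_succ (a*q^2) q m,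
    show ((q^2)*q^m : ℂ) = q^(m+2) by ring,
    show ((a*q^2)*q^m : ℂ) = a*q^(m+2) by ring,
    show m+1+2 = m+3 from rfl] at hIH1
  have t1 := tele_q (q := q) m
  have t2 := tele_aq (q := q) (a := a) m
  rw [dd]
  field_simp
  rw [mul_comm q a]
  linear_combination (-((1-q) * (-a)^m * hh q a (q^(m+3)) * (1 - a*q^(m+2)))) * t2
    + (-((1-a*q) * (1-q) * (-a)^m)) * hIH1
    + ((1-a*q) * (-a)^m * hh q a (q^2) * (1 - q^(m+2))) * t1

lemma phi2 (ha2 : lam^2 = -(a^2)) :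
    (1-q) * (hh q (a*q) (-a) * phi q lam (q^2))
    = ((1-a*q) * hh q a (q^2)) * (∑' m : ℕ, (-a)^m * ((1 - q^(m+1)) / (1 - a*q^(m+1)))) := by
  rw [phi_eq hq ha ha2 (q^2), heine_core hq ha (qPow_lt hq 2 (by norm_num)), ← tsum_mul_left,
    ← tsum_mul_left]
  refine tsum_congr fun m => ?_
  rw [show (q^2*q^m : ℂ) = q^(m+2) by ring]
  exact term2 hq ha m

lemma phi3 (ha2 : lam^2 = -(a^2)) :
    (1-q) * (hh q (a*q) (-a) * phi q lam (q^3))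
    = ((1-a*q) * hh q a (q^2)) *
      (∑' m : ℕ, (-a)^m * (((1-q^(m+1))*(1-q^(m+2))) / ((1-a*q^(m+1))*(1-a*q^(m+2))))) := by
  rw [phi_eq hq ha ha2 (q^3), heine_core hq ha (qPow_lt hq 3 (by norm_num)), ← tsum_mul_left,
    ← tsum_mul_left]
  refine tsum_congr fun m => ?_
  rw [show (q^3*q^m : ℂ) = q^(m+3) by ring]
  exact term3 hq ha m

end

section
variable {q a : ℂ} (hq : ‖q‖ < 1) (ha : ‖a‖ < 1)

include hq ha

lemma den_ge (j : ℕ) : 1 - ‖a‖ ≤ ‖(1 : ℂ) - a * q ^ j‖ := by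
  have h1 : ‖a * q ^ j‖ ≤ ‖a‖ := by
    rw [norm_mul, norm_pow]
    nlinarith [pow_le_one₀ (norm_nonneg q) hq.le (n := j), norm_nonneg a,
      pow_nonneg (norm_nonneg q) j]
  have := norm_one_sub_ge (z := a * q ^ j)
  linarith

lemma den_ne (j : ℕ) : (1 : ℂ) - a * q ^ j ≠ 0 := one_sub_ne (norm_aqn_lt hq ha j)

lemma summable_S (c : ℕ) : Summable (fun k : ℕ => (-a)^k / (1 - a * q ^ (k + c))) := by
  refine summable_of_geom_bound (C := (1-‖a‖)⁻¹) (norm_nonneg a) ha (fun k => ?_)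
  rw [norm_div, norm_pow, norm_neg]
  have h1 : (0:ℝ) < 1 - ‖a‖ := by linarith
  have h2 := den_ge hq ha (k + c)
  calc ‖a‖^k / ‖(1:ℂ) - a*q^(k+c)‖ ≤ ‖a‖^k / (1-‖a‖) := by
        apply div_le_div_of_nonneg_left (by positivity) h1 h2
  _ = (1-‖a‖)⁻¹ * ‖a‖^k := by ring

lemma summable_T1 : Summable (fun k : ℕ => (-a)^k * ((1 - q^(k+1)) / (1 - a*q^(k+1)))) := by
  refine summable_of_geom_bound (C := 2 * (1-‖a‖)⁻¹) (norm_nonneg a) ha (fun k => ?_)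
  rw [norm_mul, norm_pow, norm_neg, norm_div]
  have h1 : (0:ℝ) < 1 - ‖a‖ := by linarith
  have h2 := den_ge hq ha (k+1)
  have h3 : ‖(1:ℂ) - q^(k+1)‖ ≤ 2 := by
    calc ‖(1:ℂ) - q^(k+1)‖ ≤ ‖(1:ℂ)‖ + ‖q^(k+1)‖ := norm_sub_le _ _
    _ ≤ 1 + 1 := by
        rw [norm_one, norm_pow]
        have : ‖q‖^(k+1) ≤ 1 := pow_le_one₀ (norm_nonneg q) hq.le
        linarith
    _ = 2 := by norm_num
  have h4 : ‖(1:ℂ) - q^(k+1)‖ / ‖(1:ℂ) - a*q^(k+1)‖ ≤ 2 / (1-‖a‖) :=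
    div_le_div₀ (by norm_num) h3 h1 h2
  calc ‖a‖^k * (‖(1:ℂ) - q^(k+1)‖ / ‖(1:ℂ) - a*q^(k+1)‖) ≤ ‖a‖^k * (2/(1-‖a‖)) :=
        mul_le_mul_of_nonneg_left h4 (by positivity)
  _ = 2 * (1-‖a‖)⁻¹ * ‖a‖^k := by ring

lemma summable_T2 : Summable (fun k : ℕ =>
    (-a)^k * (((1 - q^(k+1)) * (1 - q^(k+2))) / ((1 - a*q^(k+1)) * (1 - a*q^(k+2))))) := by
  refine summable_of_geom_bound (C := 4 * ((1-‖a‖)⁻¹ * (1-‖a‖)⁻¹)) (norm_nonneg a) ha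
    (fun k => ?_)
  rw [norm_mul, norm_pow, norm_neg, norm_div, norm_mul, norm_mul]
  have h1 : (0:ℝ) < 1 - ‖a‖ := by linarith
  have h3 : ∀ j : ℕ, ‖(1:ℂ) - q^(j+1)‖ ≤ 2 := by
    intro j
    calc ‖(1:ℂ) - q^(j+1)‖ ≤ ‖(1:ℂ)‖ + ‖q^(j+1)‖ := norm_sub_le _ _
    _ ≤ 1 + 1 := by
        rw [norm_one, norm_pow]
        have : ‖q‖^(j+1) ≤ 1 := pow_le_one₀ (norm_nonneg q) hq.le
        linarith
    _ = 2 := by norm_num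
  have hnum : ‖(1:ℂ) - q^(k+1)‖ * ‖(1:ℂ) - q^(k+2)‖ ≤ 4 := by
    have := h3 k; have := h3 (k+1)
    have e : k+1+1 = k+2 := rfl
    nlinarith [norm_nonneg ((1:ℂ) - q^(k+1)), norm_nonneg ((1:ℂ) - q^(k+2))]
  have hden : (1-‖a‖) * (1-‖a‖) ≤ ‖(1:ℂ) - a*q^(k+1)‖ * ‖(1:ℂ) - a*q^(k+2)‖ := by
    have g1 := den_ge hq ha (k+1); have g2 := den_ge hq ha (k+2)
    nlinarith [norm_nonneg ((1:ℂ) - a*q^(k+1)), norm_nonneg ((1:ℂ) - a*q^(k+2))]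
  have h4 : ‖(1:ℂ) - q^(k+1)‖ * ‖(1:ℂ) - q^(k+2)‖ / (‖(1:ℂ) - a*q^(k+1)‖ * ‖(1:ℂ) - a*q^(k+2)‖)
      ≤ 4 / ((1-‖a‖) * (1-‖a‖)) := div_le_div₀ (by norm_num) hnum (by positivity) hden
  calc ‖a‖^k * (‖(1:ℂ) - q^(k+1)‖ * ‖(1:ℂ) - q^(k+2)‖
        / (‖(1:ℂ) - a*q^(k+1)‖ * ‖(1:ℂ) - a*q^(k+2)‖))
      ≤ ‖a‖^k * (4 / ((1-‖a‖) * (1-‖a‖))) := mul_le_mul_of_nonneg_left h4 (by positivity)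
  _ = 4 * ((1-‖a‖)⁻¹ * (1-‖a‖)⁻¹) * ‖a‖^k := by
      rw [div_eq_mul_inv, mul_inv]
      ring

lemma S_eq : (∑' k : ℕ, (-a)^k / (1 - a * q ^ k))
    = 1/(1-a) + (-a) * ∑' k : ℕ, (-a)^k / (1 - a * q ^ (k+1)) := by
  have hs0 : Summable (fun k : ℕ => (-a)^k / (1 - a * q ^ k)) := by
    simpa using summable_S hq ha 0
  rw [Summable.tsum_eq_zero_add hs0]
  congr 1
  · norm_num
  · rw [← tsum_mul_left]
    refine tsum_congr fun k => ?_
    rw [pow_succ]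
    ring

lemma A_eq : (∑' k : ℕ, (-a)^k / (1 - a * q ^ (k+1)))
    = 1/(1-a*q) + (-a) * ∑' k : ℕ, (-a)^k / (1 - a * q ^ (k+2)) := by
  rw [Summable.tsum_eq_zero_add (summable_S hq ha 1)]
  congr 1
  · norm_num
  · rw [← tsum_mul_left]
    refine tsum_congr fun k => ?_
    rw [pow_succ]
    have e : k+1+1 = k+2 := rfl
    rw [e]
    ring

lemma T1_eq : a * (∑' k : ℕ, (-a)^k * ((1 - q^(k+1)) / (1 - a*q^(k+1))))
    = (a-1) * (∑' k : ℕ, (-a)^k / (1 - a * q ^ (k+1))) + 1/(1+a) := by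
  have hgeo : Summable (fun k : ℕ => (-a : ℂ)^k) := by
    apply summable_geometric_of_norm_lt_one
    rwa [norm_neg]
  have hgval : (∑' k : ℕ, (-a : ℂ)^k) = 1/(1+a) := by
    rw [tsum_geometric_of_norm_lt_one (by rwa [norm_neg])]
    rw [sub_neg_eq_add, one_div]
  rw [← hgval, ← tsum_mul_left, ← tsum_mul_left]
  rw [← Summable.tsum_add ((summable_S hq ha 1).mul_left _) hgeo]
  refine tsum_congr fun k => ?_
  have hd := den_ne hq ha (k+1)
  field_simp
  ring

lemma T2_eq : a^2 * (1-q) * (∑' k : ℕ,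
      (-a)^k * (((1 - q^(k+1)) * (1 - q^(k+2))) / ((1 - a*q^(k+1)) * (1 - a*q^(k+2)))))
    = (1-q) * (1/(1+a)) + (a-1)*(a-q) * (∑' k : ℕ, (-a)^k / (1 - a * q ^ (k+1)))
      + (a-1)*(1-a*q) * (∑' k : ℕ, (-a)^k / (1 - a * q ^ (k+2))) := by
  have hgeo : Summable (fun k : ℕ => (-a : ℂ)^k) := by
    apply summable_geometric_of_norm_lt_one
    rwa [norm_neg]
  have hgval : (∑' k : ℕ, (-a : ℂ)^k) = 1/(1+a) := by
    rw [tsum_geometric_of_norm_lt_one (by rwa [norm_neg])]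
    rw [sub_neg_eq_add, one_div]
  rw [← hgval, ← tsum_mul_left, ← tsum_mul_left, ← tsum_mul_left, ← tsum_mul_left]
  rw [← Summable.tsum_add (hgeo.mul_left _) ((summable_S hq ha 1).mul_left _)]
  rw [← Summable.tsum_add ((hgeo.mul_left _).add ((summable_S hq ha 1).mul_left _))
    ((summable_S hq ha 2).mul_left _)]
  refine tsum_congr fun k => ?_
  have hd1 := den_ne hq ha (k+1)
  have hd2 := den_ne hq ha (k+2)
  field_simp
  ring

end

section
variable {q a lam : ℂ} (hq : ‖q‖ < 1) (ha : ‖a‖ < 1)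

include hq ha

lemma lemC : 1 - (1-a^2) * (∑' k : ℕ, (-a)^k / (1 - a * q ^ k))
    = -(a^2) * (1+a) * (∑' k : ℕ, (-a)^k * ((1 - q^(k+1)) / (1 - a*q^(k+1)))) := by
  have h1a : (1:ℂ) - a ≠ 0 := one_sub_ne ha
  have h1pa : (1:ℂ) + a ≠ 0 := by
    have h := one_sub_ne (z := -a) (by rwa [norm_neg])
    rwa [sub_neg_eq_add] at h
  have hinv : (1+a) * (1/(1+a)) = (1:ℂ) := mul_one_div_cancel h1pa
  have hinv3 : (1-a) * (1/(1-a)) = (1:ℂ) := mul_one_div_cancel h1a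
  have Se' : (1-a) * (∑' k : ℕ, (-a)^k / (1 - a * q ^ k))
      = 1 - a*(1-a) * (∑' k : ℕ, (-a)^k / (1 - a * q ^ (k+1))) := by
    linear_combination (1-a) * S_eq hq ha + hinv3
  have T1' : a*(1+a) * (∑' k : ℕ, (-a)^k * ((1 - q^(k+1)) / (1 - a*q^(k+1))))
      = (a-1)*(1+a) * (∑' k : ℕ, (-a)^k / (1 - a * q ^ (k+1))) + 1 := by
    linear_combination (1+a) * T1_eq hq ha + hinv
  linear_combination (-(1+a)) * Se' + a * T1'

lemma lemD (ha0 : a ≠ 0) :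
    (1+a) * ((1-a^2) * (∑' k : ℕ, (-a)^k * ((1 - q^(k+1)) / (1 - a*q^(k+1))))
      + a^2*(1-q) * (∑' k : ℕ,
        (-a)^k * (((1 - q^(k+1)) * (1 - q^(k+2))) / ((1 - a*q^(k+1)) * (1 - a*q^(k+2))))))
    = 1-q := by
  have h1pa : (1:ℂ) + a ≠ 0 := by
    have h := one_sub_ne (z := -a) (by rwa [norm_neg])
    rwa [sub_neg_eq_add] at h
  have haqne : (1:ℂ) - a*q ≠ 0 := by
    have h := den_ne hq ha 1
    rwa [pow_one] at h
  have hinv : (1+a) * (1/(1+a)) = (1:ℂ) := mul_one_div_cancel h1pa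
  have hinv2 : (1-a*q) * (1/(1-a*q)) = (1:ℂ) := mul_one_div_cancel haqne
  have T1' : a*(1+a) * (∑' k : ℕ, (-a)^k * ((1 - q^(k+1)) / (1 - a*q^(k+1))))
      = (a-1)*(1+a) * (∑' k : ℕ, (-a)^k / (1 - a * q ^ (k+1))) + 1 := by
    linear_combination (1+a) * T1_eq hq ha + hinv
  have T2' : a^2*(1-q)*(1+a) * (∑' k : ℕ,
        (-a)^k * (((1 - q^(k+1)) * (1 - q^(k+2))) / ((1 - a*q^(k+1)) * (1 - a*q^(k+2)))))
      = (1-q) + (a-1)*(a-q)*(1+a) * (∑' k : ℕ, (-a)^k / (1 - a * q ^ (k+1)))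
        + (a-1)*(1-a*q)*(1+a) * (∑' k : ℕ, (-a)^k / (1 - a * q ^ (k+2))) := by
    linear_combination (1+a) * T2_eq hq ha + (1-q) * hinv
  have A' : (1-a*q) * (∑' k : ℕ, (-a)^k / (1 - a * q ^ (k+1)))
      = 1 - a*(1-a*q) * (∑' k : ℕ, (-a)^k / (1 - a * q ^ (k+2))) := by
    linear_combination (1-a*q) * A_eq hq ha + hinv2
  apply mul_left_cancel₀ ha0
  linear_combination (1-a^2) * T1' + a * T2' + ((a-1)*(1+a)) * A'

lemma cross (ha2 : lam^2 = -(a^2)) :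
    (∑' k : ℕ, (-a)^k * ((1 - q^(k+1)) / (1 - a*q^(k+1)))) * phi q lam (q^3)
    = (∑' k : ℕ,
        (-a)^k * (((1 - q^(k+1)) * (1 - q^(k+2))) / ((1 - a*q^(k+1)) * (1 - a*q^(k+2)))))
      * phi q lam (q^2) := by
  have hg : hh q (a*q) (-a) ≠ 0 := g_ne_zero hq ha
  have h1q : (1:ℂ) - q ≠ 0 := one_sub_ne hq
  have P2 := phi2 hq ha ha2
  have P3 := phi3 hq ha ha2
  apply mul_left_cancel₀ (mul_ne_zero h1q hg)
  calc ((1-q) * hh q (a*q) (-a)) *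
        ((∑' k : ℕ, (-a)^k * ((1 - q^(k+1)) / (1 - a*q^(k+1)))) * phi q lam (q^3))
      = (∑' k : ℕ, (-a)^k * ((1 - q^(k+1)) / (1 - a*q^(k+1)))) *
        ((1-q) * (hh q (a*q) (-a) * phi q lam (q^3))) := by ring
  _ = (∑' k : ℕ, (-a)^k * ((1 - q^(k+1)) / (1 - a*q^(k+1)))) *
        (((1-a*q) * hh q a (q^2)) * (∑' m : ℕ,
          (-a)^m * (((1-q^(m+1))*(1-q^(m+2))) / ((1-a*q^(m+1))*(1-a*q^(m+2)))))) := by rw [P3]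
  _ = (∑' k : ℕ,
        (-a)^k * (((1 - q^(k+1)) * (1 - q^(k+2))) / ((1 - a*q^(k+1)) * (1 - a*q^(k+2))))) *
        (((1-a*q) * hh q a (q^2)) *
          (∑' m : ℕ, (-a)^m * ((1 - q^(m+1)) / (1 - a*q^(m+1))))) := by ring
  _ = (∑' k : ℕ,
        (-a)^k * (((1 - q^(k+1)) * (1 - q^(k+2))) / ((1 - a*q^(k+1)) * (1 - a*q^(k+2))))) *
        ((1-q) * (hh q (a*q) (-a) * phi q lam (q^2))) := by rw [P2]
  _ = ((1-q) * hh q (a*q) (-a)) * ((∑' k : ℕ,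
        (-a)^k * (((1 - q^(k+1)) * (1 - q^(k+2))) / ((1 - a*q^(k+1)) * (1 - a*q^(k+2))))) *
        phi q lam (q^2)) := by ring

end

end QT

open QT in
theorem closedForm_qTangent (q lam : ℂ) (hq : ‖q‖ < 1)
    (hlam0 : 0 < ‖lam‖) (hlam1 : ‖lam‖ < 1)
    (hlam2 : 1 + lam ^ 2 ≠ 0)
    (hphi : phi q lam (q ^ 2) ≠ 0)
    (hne : (1 + lam ^ 2) * phi q lam (q ^ 2) ≠ lam ^ 2 * (1 - q) * phi q lam (q ^ 3)) :
    (Summable fun k : ℕ => ‖(-(I * lam)) ^ k / (1 - I * lam * q ^ k)‖) ∧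
    1 / (1 - lam ^ 2 * (1 - q) * phi q lam (q ^ 3) / ((1 + lam ^ 2) * phi q lam (q ^ 2)))
      = (1 + lam ^ 2) *
          (1 - (1 + lam ^ 2) * ∑' k : ℕ, (-(I * lam)) ^ k / (1 - I * lam * q ^ k)) /
            (lam ^ 2 * (1 - q)) := by
  have hq' : ‖q‖ < 1 := by exact hq
  have ha : ‖I * lam‖ < 1 := by
    rw [norm_mul, Complex.norm_I, one_mul]; exact hlam1
  have hlamne : lam ≠ 0 := by
    intro h; rw [h] at hlam0; simp at hlam0
  have ha0 : I * lam ≠ 0 := mul_ne_zero I_ne_zero hlamne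
  have ha2 : lam^2 = -((I*lam)^2) := by
    rw [mul_pow, I_sq]; ring
  have hlam2q : lam^2 * (1-q) ≠ 0 := by
    apply mul_ne_zero (pow_ne_zero 2 hlamne) (one_sub_ne hq')
  constructor
  · -- summability of norms
    have h1 : (0:ℝ) < 1 - ‖I*lam‖ := by linarith
    refine Summable.of_nonneg_of_le (fun k => norm_nonneg _) (fun k => ?_)
      ((summable_geometric_of_lt_one (norm_nonneg _) ha).mul_left ((1-‖I*lam‖)⁻¹))
    · rw [norm_div, norm_pow, norm_neg]
      have h2 := den_ge hq' ha k
      calc ‖I*lam‖^k / ‖(1:ℂ) - I*lam*q^k‖ ≤ ‖I*lam‖^k / (1-‖I*lam‖) := by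
            apply div_le_div_of_nonneg_left (by positivity) h1 h2
      _ = (1-‖I*lam‖)⁻¹ * ‖I*lam‖^k := by ring
  · -- the identity
    have C1 := lemC (q := q) (a := I*lam) hq' ha
    have D1 := lemD (q := q) (a := I*lam) hq' ha ha0
    have X1 := cross (q := q) (a := I*lam) (lam := lam) hq' ha ha2
    have key : lam^2*(1-q) * phi q lam (q^2)
        = ((1+lam^2) * phi q lam (q^2) - lam^2*(1-q) * phi q lam (q^3))
          * (1 - (1+lam^2) * ∑' k : ℕ, (-(I*lam))^k / (1 - I*lam*q^k)) := by
      rw [show ((I*lam)^2 : ℂ) = -lam^2 by rw [mul_pow, I_sq]; ring] at C1 D1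
      linear_combination
        (-( (1+lam^2) * phi q lam (q^2) - lam^2*(1-q) * phi q lam (q^3) )) * C1
        + (lam^2*lam^2*(1-q)*(1+I*lam)) * X1
        + (-(lam^2 * phi q lam (q^2))) * D1
    have hY : (1+lam^2) * phi q lam (q^2) ≠ 0 := mul_ne_zero hlam2 hphi
    have hE : (1+lam^2) * phi q lam (q^2) - lam^2*(1-q) * phi q lam (q^3) ≠ 0 :=
      sub_ne_zero.mpr hne
    rw [show (1:ℂ) - lam ^ 2 * (1 - q) * phi q lam (q ^ 3) / ((1 + lam ^ 2) * phi q lam (q ^ 2))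
        = ((1+lam^2) * phi q lam (q^2) - lam^2*(1-q) * phi q lam (q^3)) /
          ((1 + lam ^ 2) * phi q lam (q ^ 2)) by rw [sub_div, div_self hY],
      one_div_div, div_eq_div_iff hE hlam2q]
    linear_combination (1+lam^2) * key
end

section
/- Let q, λ ∈ ℂ with |q| < 1, 0 < |λ| < 1 and 1 + λ² ≠ 0, and let μ ∈ ℂ with μ² = q. Assume ψ(λ,q) ≠ 0 and (1+λ²) ψ(λ,q) ≠ λ²(1−q) ψ(λ,q²). Then 1 / (1 − λ²(1−q) ψ(λ,q²) / ((1+λ²) ψ(λ,q))) = (1+λ²) Σ_{k=0}^∞ (−iλμ)^k/(1 − iλμ q^k), the series on the right converging absolutely (its value independent of the choice of μ). -/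
/-!
STATEMENT 16 (closed form of the limiting continued fraction, q-secant case):
`1/(1 - λ²(1-q)ψ(λ,q²)/((1+λ²)ψ(λ,q))) = (1+λ²) Σ_k (-iλ√q)^k/(1-iλ√q q^k)`.
-/

open Complex

/-- `ψ(λ,x) = Σ_k (-λ²q;q²)_k x^k / ((q;q)_k (λ²q;q)_k) = ₂φ₁(iλ√q, -iλ√q; λ²q; q, x)`. -/
noncomputable def psi (q lam x : ℂ) : ℂ :=
  ∑' k : ℕ, qPoch (-(lam ^ 2 * q)) (q ^ 2) k * x ^ k / (qPoch q q k * qPoch (lam ^ 2 * q) q k)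

namespace QSec

lemma qPoch_zero (a q : ℂ) : qPoch a q 0 = 1 := by simp [qPoch]

lemma qPoch_succ (a q : ℂ) (k : ℕ) :
    qPoch a q (k + 1) = qPoch a q k * (1 - a * q ^ k) := by
  simp [qPoch, Finset.prod_range_succ]

lemma qPoch_succ' (a q : ℂ) (k : ℕ) :
    qPoch a q (k + 1) = (1 - a) * qPoch (a * q) q k := by
  rw [qPoch, Finset.prod_range_succ']
  simp only [pow_zero, mul_one, qPoch]
  rw [mul_comm]
  congr 1
  refine Finset.prod_congr rfl fun j _ => ?_
  ring

lemma qPoch_ratio (a q : ℂ) (m : ℕ) :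
    qPoch a q m * (1 - a * q ^ m) = (1 - a) * qPoch (a * q) q m := by
  rw [← qPoch_succ, qPoch_succ']

lemma one_sub_ne_zero_of_norm_lt_one {x : ℂ} (h : ‖x‖ < 1) : (1 : ℂ) - x ≠ 0 := by
  intro hx
  have : x = 1 := by linear_combination -hx
  simp [this] at h

lemma norm_one_sub_ge {x : ℂ} {r : ℝ} (h : ‖x‖ ≤ r) : 1 - r ≤ ‖1 - x‖ := by
  have := norm_sub_norm_le (1 : ℂ) x
  rw [norm_one] at this
  linarith

lemma norm_mul_pow_le {a q : ℂ} (hq : ‖q‖ ≤ 1) (j : ℕ) : ‖a * q ^ j‖ ≤ ‖a‖ := by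
  rw [norm_mul, norm_pow]
  calc ‖a‖ * ‖q‖ ^ j ≤ ‖a‖ * 1 := by
        refine mul_le_mul_of_nonneg_left ?_ (norm_nonneg a)
        exact pow_le_one₀ (norm_nonneg q) hq
    _ = ‖a‖ := mul_one _

lemma qPoch_ne_zero {a q : ℂ} (hq : ‖q‖ ≤ 1) (ha : ‖a‖ < 1) (k : ℕ) :
    qPoch a q k ≠ 0 := by
  refine Finset.prod_ne_zero_iff.2 fun j _ => ?_
  exact one_sub_ne_zero_of_norm_lt_one (lt_of_le_of_lt (norm_mul_pow_le hq j) ha)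

lemma qPoch_q_ne_zero {q : ℂ} (hq : ‖q‖ < 1) (k : ℕ) : qPoch q q k ≠ 0 :=
  qPoch_ne_zero (le_of_lt hq) hq k


/-- upper bound on `‖qPoch a q k‖`. -/
lemma norm_qPoch_le (a : ℂ) {q : ℂ} (hq : ‖q‖ < 1) (k : ℕ) :
    ‖qPoch a q k‖ ≤ Real.exp (‖a‖ * (1 - ‖q‖)⁻¹) := by
  have h1 : ‖qPoch a q k‖ ≤ ∏ j ∈ Finset.range k, (1 + ‖a‖ * ‖q‖ ^ j) := by
    rw [qPoch, norm_prod]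
    refine Finset.prod_le_prod (fun j _ => norm_nonneg _) fun j _ => ?_
    calc ‖1 - a * q ^ j‖ ≤ ‖(1 : ℂ)‖ + ‖a * q ^ j‖ := norm_sub_le _ _
      _ = 1 + ‖a‖ * ‖q‖ ^ j := by rw [norm_one, norm_mul, norm_pow]
  refine h1.trans ?_
  have h2 : ∏ j ∈ Finset.range k, (1 + ‖a‖ * ‖q‖ ^ j)
      ≤ ∏ j ∈ Finset.range k, Real.exp (‖a‖ * ‖q‖ ^ j) := by
    refine Finset.prod_le_prod (fun j _ => by positivity) fun j _ => ?_
    have := Real.add_one_le_exp (‖a‖ * ‖q‖ ^ j)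
    linarith
  refine h2.trans ?_
  rw [← Real.exp_sum]
  refine Real.exp_le_exp.2 ?_
  rw [← Finset.mul_sum]
  refine mul_le_mul_of_nonneg_left ?_ (norm_nonneg a)
  have hsum : Summable fun j : ℕ => ‖q‖ ^ j :=
    summable_geometric_of_lt_one (norm_nonneg q) hq
  calc ∑ j ∈ Finset.range k, ‖q‖ ^ j ≤ ∑' j : ℕ, ‖q‖ ^ j :=
        Summable.sum_le_tsum _ (fun j _ => by positivity) hsum
    _ = (1 - ‖q‖)⁻¹ := tsum_geometric_of_lt_one (norm_nonneg q) hq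

lemma prod_one_sub_ge (t : ℕ → ℝ) (ht0 : ∀ j, 0 ≤ t j) (ht1 : ∀ j, t j ≤ 1) (n : ℕ) :
    1 - ∑ j ∈ Finset.range n, t j ≤ ∏ j ∈ Finset.range n, (1 - t j) := by
  induction n with
  | zero => simp
  | succ n ih =>
    rw [Finset.sum_range_succ, Finset.prod_range_succ]
    have hp : (0:ℝ) ≤ ∏ j ∈ Finset.range n, (1 - t j) :=
      Finset.prod_nonneg fun j _ => by linarith [ht1 j]
    have htn0 := ht0 n
    have htn1 := ht1 n
    rcases le_or_gt (1 - ∑ j ∈ Finset.range n, t j) 0 with h | h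
    · have : (0:ℝ) ≤ (∏ j ∈ Finset.range n, (1 - t j)) * (1 - t n) :=
        mul_nonneg hp (by linarith)
      linarith
    · have h2 := mul_le_mul_of_nonneg_right ih (by linarith : (0:ℝ) ≤ 1 - t n)
      have hS : (0:ℝ) ≤ ∑ j ∈ Finset.range n, t j := Finset.sum_nonneg fun j _ => ht0 j
      nlinarith

/-- uniform positive lower bound on `‖qPoch q q n‖`. -/
lemma exists_qPoch_q_lower {q : ℂ} (hq : ‖q‖ < 1) :
    ∃ c : ℝ, 0 < c ∧ ∀ n, c ≤ ‖qPoch q q n‖ := by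
  set r := ‖q‖ with hr
  have hr0 : 0 ≤ r := norm_nonneg q
  have hhalf : (0:ℝ) < (1 - r) / 2 := by linarith
  obtain ⟨J, hJ⟩ := exists_pow_lt_of_lt_one hhalf hq
  set p : ℕ → ℝ := fun n => ∏ j ∈ Finset.range n, (1 - r ^ (j + 1)) with hp
  have hfac : ∀ j : ℕ, 0 < 1 - r ^ (j + 1) := by
    intro j
    have h1 : r ^ (j + 1) ≤ r := pow_le_of_le_one hr0 (le_of_lt hq) (by omega)
    linarith
  have hppos : ∀ n, 0 < p n := fun n => Finset.prod_pos fun j _ => hfac j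
  have hanti : Antitone p := by
    refine antitone_nat_of_succ_le fun n => ?_
    have heq : p (n + 1) = p n * (1 - r ^ (n + 1)) := Finset.prod_range_succ _ _
    have hnn : (0:ℝ) ≤ p n * r ^ (n + 1) :=
      mul_nonneg (le_of_lt (hppos n)) (pow_nonneg hr0 (n + 1))
    nlinarith
  refine ⟨p J * (1/2), mul_pos (hppos J) (by norm_num), fun n => ?_⟩
  have key : p J * (1/2) ≤ p n := by
    rcases le_or_gt n J with h | h
    · have := hanti h
      nlinarith [hppos J]
    · have hsplit : p n = p J * ∏ j ∈ Finset.Ico J n, (1 - r ^ (j + 1)) := by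
        rw [hp]
        simp only
        rw [Finset.range_eq_Ico, ← Finset.prod_Ico_consecutive _ (Nat.zero_le J) (le_of_lt h),
          ← Finset.range_eq_Ico]
      have hsum_le : ∑ i ∈ Finset.range (n - J), r ^ (J + i + 1) ≤ 1 / 2 := by
        have h2 : ∀ i, r ^ (J + i + 1) = r ^ J * (r * r ^ i) := fun i => by ring
        simp only [h2]
        rw [← Finset.mul_sum]
        have hsumg : Summable fun i : ℕ => r * r ^ i :=
          (summable_geometric_of_lt_one hr0 hq).mul_left r
        have h3 : ∑ i ∈ Finset.range (n - J), r * r ^ i ≤ r * (1 - r)⁻¹ := by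
          calc ∑ i ∈ Finset.range (n - J), r * r ^ i ≤ ∑' i : ℕ, r * r ^ i :=
                Summable.sum_le_tsum _ (fun i _ => by positivity) hsumg
            _ = r * (1 - r)⁻¹ := by
                rw [tsum_mul_left, tsum_geometric_of_lt_one hr0 hq]
        have hrJ : 0 ≤ r ^ J := pow_nonneg hr0 J
        have hge : (0:ℝ) ≤ r * (1 - r)⁻¹ :=
          mul_nonneg hr0 (inv_nonneg.2 (by linarith))
        calc r ^ J * ∑ i ∈ Finset.range (n - J), r * r ^ i ≤ r ^ J * (r * (1-r)⁻¹) := by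
              nlinarith
          _ ≤ ((1 - r)/2) * (r * (1 - r)⁻¹) :=
              mul_le_mul_of_nonneg_right (le_of_lt hJ) hge
          _ = r / 2 := by
              have h1r : (1:ℝ) - r ≠ 0 := by linarith
              field_simp
          _ ≤ 1/2 := by linarith
      have hprod_ge : (1:ℝ)/2 ≤ ∏ j ∈ Finset.Ico J n, (1 - r ^ (j + 1)) := by
        have hh := prod_one_sub_ge (fun i => r ^ (J + i + 1)) (fun i => by positivity)
          (fun i => by nlinarith [hfac (J + i)]) (n - J)
        rw [Finset.prod_Ico_eq_prod_range]
        calc (1:ℝ)/2 ≤ 1 - ∑ i ∈ Finset.range (n - J), r ^ (J + i + 1) := by linarith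
          _ ≤ _ := hh
      rw [hsplit]
      nlinarith [hppos J]
  refine key.trans ?_
  rw [qPoch, norm_prod]
  refine Finset.prod_le_prod (fun j _ => le_of_lt (hfac j)) fun j _ => ?_
  refine norm_one_sub_ge ?_
  rw [norm_mul, norm_pow, ← hr, ← pow_succ']

/-- `H a q w = Σ_n (a;q)_n w^n / (q;q)_n`. -/
noncomputable def Hf (a q w : ℂ) : ℂ := ∑' n : ℕ, qPoch a q n * w ^ n / qPoch q q n

/-- a uniform geometric bound on the terms of `Hf`. -/
lemma exists_K (a : ℂ) {q : ℂ} (hq : ‖q‖ < 1) :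
    ∃ K : ℝ, 0 < K ∧ ∀ (w : ℂ) (n : ℕ),
      ‖qPoch a q n * w ^ n / qPoch q q n‖ ≤ K * ‖w‖ ^ n := by
  obtain ⟨c, hc, hcle⟩ := exists_qPoch_q_lower hq
  refine ⟨Real.exp (‖a‖ * (1 - ‖q‖)⁻¹) / c, by positivity, fun w n => ?_⟩
  rw [norm_div, norm_mul, norm_pow]
  rw [div_le_iff₀ (lt_of_lt_of_le hc (hcle n))]
  have h1 : ‖qPoch a q n‖ * ‖w‖ ^ n ≤ Real.exp (‖a‖ * (1 - ‖q‖)⁻¹) * ‖w‖ ^ n :=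
    mul_le_mul_of_nonneg_right (norm_qPoch_le a hq n) (by positivity)
  calc ‖qPoch a q n‖ * ‖w‖ ^ n ≤ Real.exp (‖a‖ * (1 - ‖q‖)⁻¹) * ‖w‖ ^ n := h1
    _ = (Real.exp (‖a‖ * (1 - ‖q‖)⁻¹) / c) * ‖w‖ ^ n * c := by
        field_simp
    _ ≤ Real.exp (‖a‖ * (1 - ‖q‖)⁻¹) / c * ‖w‖ ^ n * ‖qPoch q q n‖ := by
        refine mul_le_mul_of_nonneg_left (hcle n) (by positivity)

lemma summable_Hterm (a : ℂ) {q w : ℂ} (hq : ‖q‖ < 1) (hw : ‖w‖ < 1) :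
    Summable fun n : ℕ => qPoch a q n * w ^ n / qPoch q q n := by
  obtain ⟨K, hK, hKle⟩ := exists_K a hq
  refine Summable.of_norm_bounded ?_ (fun n => hKle w n)
  exact (summable_geometric_of_lt_one (norm_nonneg w) hw).mul_left K

/-- the `q`-difference (contiguous) equation for `Hf`. -/
lemma Hf_fe (a : ℂ) {q w : ℂ} (hq : ‖q‖ < 1) (hw : ‖w‖ < 1) :
    (1 - w) * Hf a q w = (1 - a * w) * Hf a q (q * w) := by
  have hqw : ‖q * w‖ < 1 := by
    rw [norm_mul]
    calc ‖q‖ * ‖w‖ ≤ 1 * ‖w‖ := mul_le_mul_of_nonneg_right (le_of_lt hq) (norm_nonneg w)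
      _ = ‖w‖ := one_mul _
      _ < 1 := hw
  have hf : Summable fun n : ℕ => qPoch a q n * w ^ n / qPoch q q n := summable_Hterm a hq hw
  have hg : Summable fun n : ℕ => qPoch a q n * (q * w) ^ n / qPoch q q n :=
    summable_Hterm a hq hqw
  have hd : Summable fun n : ℕ =>
      qPoch a q n * w ^ n / qPoch q q n - qPoch a q n * (q * w) ^ n / qPoch q q n := hf.sub hg
  have key : Hf a q w - Hf a q (q * w) = w * Hf a q w - a * w * Hf a q (q * w) := by
    have e1 : Hf a q w - Hf a q (q * w)
        = ∑' n : ℕ, (qPoch a q n * w ^ n / qPoch q q n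
            - qPoch a q n * (q * w) ^ n / qPoch q q n) := (Summable.tsum_sub hf hg).symm
    rw [e1, Summable.tsum_eq_zero_add hd]
    simp only [pow_zero, qPoch_zero, mul_one, one_mul, sub_self, zero_add]
    have e2 : ∀ n : ℕ, qPoch a q (n + 1) * w ^ (n + 1) / qPoch q q (n + 1)
          - qPoch a q (n + 1) * (q * w) ^ (n + 1) / qPoch q q (n + 1)
        = w * (qPoch a q n * w ^ n / qPoch q q n)
          - a * w * (qPoch a q n * (q * w) ^ n / qPoch q q n) := by
      intro n
      have hQn : qPoch q q n ≠ 0 := qPoch_q_ne_zero hq n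
      have hfac : (1 : ℂ) - q * q ^ n ≠ 0 :=
        one_sub_ne_zero_of_norm_lt_one (lt_of_le_of_lt (norm_mul_pow_le (le_of_lt hq) n) hq)
      have hfac' : (1 : ℂ) - q ^ n * q ≠ 0 := by
        rw [mul_comm]; exact hfac
      rw [qPoch_succ a q n, qPoch_succ q q n]
      field_simp
      ring
    rw [tsum_congr e2, Summable.tsum_sub ((hf.mul_left w)) ((hg.mul_left (a * w))),
      tsum_mul_left, tsum_mul_left]
    rfl
  linear_combination key

/-- iterated functional equation. -/
lemma Hf_shift (a : ℂ) {q w : ℂ} (hq : ‖q‖ < 1) (hw : ‖w‖ < 1) (n : ℕ) :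
    Hf a q w * qPoch w q n = qPoch (a * w) q n * Hf a q (w * q ^ n) := by
  induction n with
  | zero => simp [qPoch_zero]
  | succ n ih =>
    have hwqn : ‖w * q ^ n‖ < 1 := lt_of_le_of_lt (norm_mul_pow_le (le_of_lt hq) n) hw
    have hfe := Hf_fe a hq hwqn
    rw [qPoch_succ w q n, qPoch_succ (a * w) q n, ← mul_assoc, ih]
    have harg : q * (w * q ^ n) = w * q ^ (n + 1) := by ring
    rw [harg] at hfe
    have h2 : (1 - w * q ^ n) * Hf a q (w * q ^ n)
        = (1 - a * w * q ^ n) * Hf a q (w * q ^ (n + 1)) := by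
      linear_combination hfe
    calc qPoch (a * w) q n * Hf a q (w * q ^ n) * (1 - w * q ^ n)
        = qPoch (a * w) q n * ((1 - w * q ^ n) * Hf a q (w * q ^ n)) := by ring
      _ = qPoch (a * w) q n * ((1 - a * w * q ^ n) * Hf a q (w * q ^ (n + 1))) := by rw [h2]
      _ = qPoch (a * w) q n * (1 - a * w * q ^ n) * Hf a q (w * q ^ (n + 1)) := by ring

/-- `Hf` is close to `1` for small `w`. -/
lemma Hf_sub_one_bound (a : ℂ) {q : ℂ} (hq : ‖q‖ < 1) :
    ∃ K : ℝ, 0 < K ∧ ∀ w : ℂ, ‖w‖ < 1 → ‖Hf a q w - 1‖ ≤ K * ‖w‖ / (1 - ‖w‖) := by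
  obtain ⟨K, hK, hKle⟩ := exists_K a hq
  refine ⟨K, hK, fun w hw => ?_⟩
  have hf : Summable fun n : ℕ => qPoch a q n * w ^ n / qPoch q q n := summable_Hterm a hq hw
  have e1 : Hf a q w - 1 = ∑' n : ℕ, qPoch a q (n+1) * w ^ (n+1) / qPoch q q (n+1) := by
    rw [Hf, Summable.tsum_eq_zero_add hf]
    simp [qPoch_zero]
  rw [e1]
  have hgeo : Summable fun n : ℕ => K * ‖w‖ ^ (n + 1) := by
    have h0 := (summable_geometric_of_lt_one (norm_nonneg w) hw).mul_left (K * ‖w‖)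
    refine h0.congr fun n => by ring
  have hnorm : Summable fun n : ℕ => ‖qPoch a q (n+1) * w ^ (n+1) / qPoch q q (n+1)‖ :=
    Summable.of_nonneg_of_le (fun n => norm_nonneg _) (fun n => hKle w (n+1)) hgeo
  calc ‖∑' n : ℕ, qPoch a q (n+1) * w ^ (n+1) / qPoch q q (n+1)‖
      ≤ ∑' n : ℕ, ‖qPoch a q (n+1) * w ^ (n+1) / qPoch q q (n+1)‖ :=
        norm_tsum_le_tsum_norm hnorm
    _ ≤ ∑' n : ℕ, K * ‖w‖ ^ (n + 1) := Summable.tsum_le_tsum (fun n => hKle w (n+1)) hnorm hgeo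
    _ = K * ‖w‖ / (1 - ‖w‖) := by
        have he : ∀ n : ℕ, K * ‖w‖ ^ (n+1) = (K * ‖w‖) * ‖w‖ ^ n := fun n => by ring
        rw [tsum_congr he, tsum_mul_left, tsum_geometric_of_lt_one (norm_nonneg w) hw]
        field_simp

lemma norm_sq_lt_one {a : ℂ} (ha : ‖a‖ < 1) : ‖-(a^2)‖ < 1 := by
  rw [norm_neg, norm_pow]
  nlinarith [norm_nonneg a]

lemma Hf_neg_ne_zero {a q : ℂ} (hq : ‖q‖ < 1) (ha : ‖a‖ < 1) : Hf a q (-a) ≠ 0 := by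
  intro h0
  have hma : ‖(-a)‖ < 1 := by rwa [norm_neg]
  have hvanish : ∀ n : ℕ, Hf a q (-a * q ^ n) = 0 := by
    intro n
    have hs := Hf_shift a hq hma n
    rw [h0, zero_mul] at hs
    have hne : qPoch (a * -a) q n ≠ 0 := by
      refine qPoch_ne_zero (le_of_lt hq) ?_ n
      rw [norm_mul, norm_neg]
      nlinarith [norm_nonneg a]
    exact (mul_eq_zero.1 hs.symm).resolve_left hne
  obtain ⟨K, hK, hKb⟩ := Hf_sub_one_bound a hq
  have hεpos : (0:ℝ) < (1 - ‖a‖) / ((K + 1) * (‖a‖ + 1)) := by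
    have h1 : (0:ℝ) < (K + 1) * (‖a‖ + 1) := by nlinarith [norm_nonneg a]
    exact div_pos (by linarith) h1
  obtain ⟨n, hn⟩ := exists_pow_lt_of_lt_one hεpos hq
  set w : ℂ := -a * q ^ n with hw
  have hwle : ‖w‖ ≤ ‖a‖ := by
    rw [hw]
    have := norm_mul_pow_le (a := -a) (q := q) (le_of_lt hq) n
    rwa [norm_neg] at this
  have hw1 : ‖w‖ < 1 := lt_of_le_of_lt hwle ha
  have hb := hKb w hw1
  rw [hvanish n] at hb
  rw [zero_sub, norm_neg, norm_one] at hb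
  -- now 1 ≤ K * ‖w‖ / (1 - ‖w‖), derive contradiction
  have hwn : ‖w‖ = ‖a‖ * ‖q‖ ^ n := by rw [hw, norm_mul, norm_neg, norm_pow]
  have h1w : 1 - ‖a‖ ≤ 1 - ‖w‖ := by linarith
  have hden : (0:ℝ) < 1 - ‖w‖ := by linarith
  rw [le_div_iff₀ hden] at hb
  have hKw : K * ‖w‖ < 1 - ‖a‖ := by
    rw [hwn]
    calc K * (‖a‖ * ‖q‖ ^ n) ≤ (K+1) * (‖a‖+1) * ‖q‖ ^ n := by
          nlinarith [norm_nonneg a, pow_nonneg (norm_nonneg q) n]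
      _ < (K+1) * (‖a‖+1) * ((1 - ‖a‖) / ((K + 1) * (‖a‖ + 1))) := by
          have h1 : (0:ℝ) < (K + 1) * (‖a‖ + 1) := by nlinarith [norm_nonneg a]
          exact mul_lt_mul_of_pos_left hn h1
      _ = 1 - ‖a‖ := by
          have h1 : ((K:ℝ) + 1) * (‖a‖ + 1) ≠ 0 := by nlinarith [norm_nonneg a]
          field_simp
  nlinarith [norm_nonneg w]

lemma star {a q : ℂ} (hq : ‖q‖ < 1) (ha : ‖a‖ < 1) {z : ℂ} (hz : ‖z‖ < 1) :
    (∑' n : ℕ, qPoch a q n * qPoch (-a) q n * z ^ n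
        / (qPoch q q n * qPoch (-(a ^ 2)) q n)) * Hf a q (-a)
      = ∑' m : ℕ, qPoch a q m * (-a) ^ m / qPoch q q m * Hf a q (z * q ^ m) := by
  have hma : ‖(-a)‖ < 1 := by rwa [norm_neg]
  set F : ℕ → ℕ → ℂ := fun n m =>
    qPoch a q n * z ^ n / qPoch q q n * (qPoch a q m * (-a) ^ m / qPoch q q m) * q ^ (n * m)
    with hF
  -- step 1: LHS = ∑' n, ∑' m, F n m
  have step1 : (∑' n : ℕ, qPoch a q n * qPoch (-a) q n * z ^ n
        / (qPoch q q n * qPoch (-(a ^ 2)) q n)) * Hf a q (-a)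
      = ∑' n : ℕ, ∑' m : ℕ, F n m := by
    rw [← tsum_mul_right]
    refine tsum_congr fun n => ?_
    have hshift := Hf_shift a hq hma n
    have harg : a * -a = -(a ^ 2) := by ring
    rw [harg] at hshift
    have hQ : qPoch q q n ≠ 0 := qPoch_q_ne_zero hq n
    have hC : qPoch (-(a ^ 2)) q n ≠ 0 := qPoch_ne_zero (le_of_lt hq) (norm_sq_lt_one ha) n
    have e1 : qPoch a q n * qPoch (-a) q n * z ^ n / (qPoch q q n * qPoch (-(a ^ 2)) q n)
          * Hf a q (-a)
        = qPoch a q n * z ^ n / qPoch q q n * Hf a q (-a * q ^ n) := by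
      set X := Hf a q (-a) with hX
      set Y := Hf a q (-a * q ^ n) with hY
      field_simp
      linear_combination (qPoch a q n * z ^ n) * hshift
    rw [e1, Hf, ← tsum_mul_left]
    refine tsum_congr fun m => ?_
    rw [hF]
    simp only
    rw [mul_pow, ← pow_mul]
    ring
  -- step 2: swap
  have hsw : Summable (Function.uncurry F) := by
    obtain ⟨K, hK, hKle⟩ := exists_K a hq
    have hgz : Summable fun n : ℕ => K * ‖z‖ ^ n :=
      (summable_geometric_of_lt_one (norm_nonneg z) hz).mul_left K
    have hga : Summable fun m : ℕ => K * ‖a‖ ^ m :=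
      (summable_geometric_of_lt_one (norm_nonneg a) ha).mul_left K
    have hprod : Summable fun p : ℕ × ℕ => (K * ‖z‖ ^ p.1) * (K * ‖a‖ ^ p.2) :=
      hgz.mul_of_nonneg hga (fun n => by positivity) (fun m => by positivity)
    refine Summable.of_norm_bounded hprod fun p => ?_
    rw [Function.uncurry, hF]
    simp only
    rw [norm_mul, norm_mul]
    have h1 : ‖qPoch a q p.1 * z ^ p.1 / qPoch q q p.1‖ ≤ K * ‖z‖ ^ p.1 := hKle z p.1
    have h2 : ‖qPoch a q p.2 * (-a) ^ p.2 / qPoch q q p.2‖ ≤ K * ‖a‖ ^ p.2 := by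
      have := hKle (-a) p.2
      rwa [norm_neg] at this
    have h3 : ‖q ^ (p.1 * p.2)‖ ≤ 1 := by
      rw [norm_pow]
      exact pow_le_one₀ (norm_nonneg q) (le_of_lt hq)
    calc ‖qPoch a q p.1 * z ^ p.1 / qPoch q q p.1‖
          * ‖qPoch a q p.2 * (-a) ^ p.2 / qPoch q q p.2‖ * ‖q ^ (p.1 * p.2)‖
        ≤ (K * ‖z‖ ^ p.1) * (K * ‖a‖ ^ p.2) * 1 := by
          refine mul_le_mul (mul_le_mul h1 h2 (norm_nonneg _) (by positivity)) h3
            (norm_nonneg _) (by positivity)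
      _ = (K * ‖z‖ ^ p.1) * (K * ‖a‖ ^ p.2) := mul_one _
  have step2 : ∑' n : ℕ, ∑' m : ℕ, F n m = ∑' m : ℕ, ∑' n : ℕ, F n m :=
    (Summable.tsum_comm hsw).symm
  -- step 3: inner sum over n is Hf at z * q ^ m
  have step3 : ∀ m : ℕ, ∑' n : ℕ, F n m
      = qPoch a q m * (-a) ^ m / qPoch q q m * Hf a q (z * q ^ m) := by
    intro m
    rw [Hf, ← tsum_mul_left]
    refine tsum_congr fun n => ?_
    rw [hF]
    simp only
    rw [mul_pow, ← pow_mul]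
    ring
  rw [step1, step2]
  exact tsum_congr step3

-- nonvanishing of 1 - a*q^m type terms
lemma one_sub_mul_pow_ne {a q : ℂ} (hq : ‖q‖ ≤ 1) (ha : ‖a‖ < 1) (m : ℕ) :
    (1 : ℂ) - a * q ^ m ≠ 0 :=
  one_sub_ne_zero_of_norm_lt_one (lt_of_le_of_lt (norm_mul_pow_le hq m) ha)

lemma norm_aq_lt {a q : ℂ} (hq : ‖q‖ ≤ 1) (ha : ‖a‖ < 1) : ‖a * q‖ < 1 := by
  calc ‖a * q‖ = ‖a * q ^ 1‖ := by rw [pow_one]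
    _ ≤ ‖a‖ := norm_mul_pow_le hq 1
    _ < 1 := ha

/-- summability of the Lambert-type series. -/
lemma summable_T {a q : ℂ} (hq : ‖q‖ ≤ 1) (ha : ‖a‖ < 1) :
    Summable fun m : ℕ => (-a) ^ m / (1 - a * q ^ m) := by
  refine Summable.of_norm_bounded (g := fun m : ℕ => (1 - ‖a‖)⁻¹ * ‖a‖ ^ m)
    ((summable_geometric_of_lt_one (norm_nonneg a) ha).mul_left _) fun m => ?_
  rw [norm_div, norm_pow, norm_neg]
  have h1 : 1 - ‖a‖ ≤ ‖1 - a * q ^ m‖ := norm_one_sub_ge (norm_mul_pow_le hq m)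
  have h2 : (0:ℝ) < 1 - ‖a‖ := by linarith
  rw [div_le_iff₀ (lt_of_lt_of_le h2 h1)]
  calc ‖a‖ ^ m = (1 - ‖a‖)⁻¹ * ‖a‖ ^ m * (1 - ‖a‖) := by
        rw [eq_comm, mul_comm, ← mul_assoc, mul_inv_cancel₀ (ne_of_gt h2), one_mul]
    _ ≤ (1 - ‖a‖)⁻¹ * ‖a‖ ^ m * ‖1 - a * q ^ m‖ := by
        refine mul_le_mul_of_nonneg_left h1 (by positivity)

lemma summable_V {a q : ℂ} (hq : ‖q‖ ≤ 1) (ha : ‖a‖ < 1) :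
    Summable fun m : ℕ => (-a) ^ m / (1 - a * (q * q ^ m)) := by
  refine Summable.of_norm_bounded (g := fun m : ℕ => (1 - ‖a‖)⁻¹ * ‖a‖ ^ m)
    ((summable_geometric_of_lt_one (norm_nonneg a) ha).mul_left _) fun m => ?_
  rw [norm_div, norm_pow, norm_neg]
  have h0 : ‖a * (q * q ^ m)‖ ≤ ‖a‖ := by
    have := norm_mul_pow_le (a := a) (q := q) hq (m + 1)
    calc ‖a * (q * q ^ m)‖ = ‖a * q ^ (m+1)‖ := by rw [pow_succ']
      _ ≤ ‖a‖ := this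
  have h1 : 1 - ‖a‖ ≤ ‖1 - a * (q * q ^ m)‖ := norm_one_sub_ge h0
  have h2 : (0:ℝ) < 1 - ‖a‖ := by linarith
  rw [div_le_iff₀ (lt_of_lt_of_le h2 h1)]
  calc ‖a‖ ^ m = (1 - ‖a‖)⁻¹ * ‖a‖ ^ m * (1 - ‖a‖) := by
        rw [eq_comm, mul_comm, ← mul_assoc, mul_inv_cancel₀ (ne_of_gt h2), one_mul]
    _ ≤ (1 - ‖a‖)⁻¹ * ‖a‖ ^ m * ‖1 - a * (q * q ^ m)‖ := by
        refine mul_le_mul_of_nonneg_left h1 (by positivity)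

/-- (A'): `ψ(q) H(-a) = H(q) (1-a) T`. -/
lemma Apr {a q : ℂ} (hq : ‖q‖ < 1) (ha : ‖a‖ < 1) :
    (∑' n : ℕ, qPoch a q n * qPoch (-a) q n * q ^ n
        / (qPoch q q n * qPoch (-(a ^ 2)) q n)) * Hf a q (-a)
      = Hf a q q * ((1 - a) * ∑' m : ℕ, (-a) ^ m / (1 - a * q ^ m)) := by
  rw [star hq ha hq]
  have key : ∀ m : ℕ, qPoch a q m * (-a) ^ m / qPoch q q m * Hf a q (q * q ^ m)
      = Hf a q q * ((1 - a) * ((-a) ^ m / (1 - a * q ^ m))) := by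
    intro m
    have hshift := Hf_shift a hq hq m
    have hQ : qPoch q q m ≠ 0 := qPoch_q_ne_zero hq m
    have hP : qPoch (a * q) q m ≠ 0 :=
      qPoch_ne_zero (le_of_lt hq) (norm_aq_lt (le_of_lt hq) ha) m
    have hd : (1 : ℂ) - a * q ^ m ≠ 0 := one_sub_mul_pow_ne (le_of_lt hq) ha m
    have hr := qPoch_ratio a q m
    set X := Hf a q q with hX
    set Y := Hf a q (q * q ^ m) with hY
    have hY' : Y = X * qPoch q q m / qPoch (a * q) q m := by
      rw [eq_div_iff hP]
      linear_combination -hshift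
    rw [hY']
    field_simp
    linear_combination ((-a)^m * X) * hr
  rw [tsum_congr key, tsum_mul_left, tsum_mul_left]

/-- (B'): `ψ(q²) H(-a) = H(q) (1-a) U`. -/
lemma Bpr {a q : ℂ} (hq : ‖q‖ < 1) (ha : ‖a‖ < 1) :
    (∑' n : ℕ, qPoch a q n * qPoch (-a) q n * (q ^ 2) ^ n
        / (qPoch q q n * qPoch (-(a ^ 2)) q n)) * Hf a q (-a)
      = Hf a q q * ((1 - a) * ∑' m : ℕ,
          (-a) ^ m * (1 - q * q ^ m) / ((1 - a * q ^ m) * (1 - a * (q * q ^ m)))) := by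
  have hq2 : ‖q ^ 2‖ < 1 := by
    rw [norm_pow]
    nlinarith [norm_nonneg q]
  rw [star hq ha hq2]
  have key : ∀ m : ℕ, qPoch a q m * (-a) ^ m / qPoch q q m * Hf a q (q ^ 2 * q ^ m)
      = Hf a q q * ((1 - a) * ((-a) ^ m * (1 - q * q ^ m)
          / ((1 - a * q ^ m) * (1 - a * (q * q ^ m))))) := by
    intro m
    have hshift := Hf_shift a hq hq (m + 1)
    have harg : q * q ^ (m + 1) = q ^ 2 * q ^ m := by ring
    rw [harg] at hshift
    rw [qPoch_succ q q m, qPoch_succ (a * q) q m] at hshift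
    have hQ : qPoch q q m ≠ 0 := qPoch_q_ne_zero hq m
    have hP : qPoch (a * q) q m ≠ 0 :=
      qPoch_ne_zero (le_of_lt hq) (norm_aq_lt (le_of_lt hq) ha) m
    have hd1 : (1 : ℂ) - a * q ^ m ≠ 0 := one_sub_mul_pow_ne (le_of_lt hq) ha m
    have hd2 : (1 : ℂ) - a * (q * q ^ m) ≠ 0 := by
      have h := one_sub_mul_pow_ne (le_of_lt hq) ha (m + 1)
      rw [show a * (q * q ^ m) = a * q ^ (m+1) by rw [pow_succ']]
      exact h
    have hd2' : (1 : ℂ) - a * q * q ^ m ≠ 0 := by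
      rw [mul_assoc]; exact hd2
    have hr := qPoch_ratio a q m
    set X := Hf a q q with hX
    set Y := Hf a q (q ^ 2 * q ^ m) with hY
    have hY' : Y = X * (qPoch q q m * (1 - q * q ^ m))
        / (qPoch (a * q) q m * (1 - a * q * q ^ m)) := by
      rw [eq_div_iff (mul_ne_zero hP hd2')]
      linear_combination -hshift
    rw [hY']
    field_simp
    linear_combination ((-a)^m * X * (1 - q*q^m)) * hr
  rw [tsum_congr key, tsum_mul_left, tsum_mul_left]

lemma qPoch_sq (a q : ℂ) (k : ℕ) :
    qPoch (a ^ 2) (q ^ 2) k = qPoch a q k * qPoch (-a) q k := by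
  rw [qPoch, qPoch, qPoch, ← Finset.prod_mul_distrib]
  refine Finset.prod_congr rfl fun j _ => by ring

/-- the telescoping algebraic identity `(1+λ²)T - λ²(1-q)U = 1`. -/
lemma alg {a q lam : ℂ} (hq : ‖q‖ < 1) (ha : ‖a‖ < 1) (ha0 : a ≠ 0) (hq0 : q ≠ 0)
    (hrel : a ^ 2 = -(lam ^ 2 * q)) :
    (1 + lam ^ 2) * (∑' m : ℕ, (-a) ^ m / (1 - a * q ^ m))
      - lam ^ 2 * (1 - q) * (∑' m : ℕ,
          (-a) ^ m * (1 - q * q ^ m) / ((1 - a * q ^ m) * (1 - a * (q * q ^ m)))) = 1 := by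
  have hq' : ‖q‖ ≤ 1 := le_of_lt hq
  have hTsum := summable_T (a := a) (q := q) hq' ha
  have hVsum := summable_V (a := a) (q := q) hq' ha
  set T : ℂ := ∑' m : ℕ, (-a) ^ m / (1 - a * q ^ m) with hT
  set V : ℂ := ∑' m : ℕ, (-a) ^ m / (1 - a * (q * q ^ m)) with hV
  have ha1 : (1 : ℂ) - a ≠ 0 := one_sub_ne_zero_of_norm_lt_one ha
  have hq1 : q - 1 ≠ 0 := by
    refine sub_ne_zero.mpr fun h => ?_
    rw [h] at hq
    simp at hq
  have hlam : lam ^ 2 = -(a ^ 2) / q := by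
    rw [eq_div_iff hq0]
    linear_combination hrel
  -- T = 1/(1-a) - a*V
  have hTV : T = 1 / (1 - a) - a * V := by
    rw [hT, Summable.tsum_eq_zero_add hTsum]
    simp only [pow_zero, mul_one, one_div]
    have he : ∀ m : ℕ, (-a) ^ (m + 1) / (1 - a * q ^ (m + 1))
        = -a * ((-a) ^ m / (1 - a * (q * q ^ m))) := by
      intro m
      rw [pow_succ' (-a) m, pow_succ' q m, mul_div_assoc]
    rw [tsum_congr he, tsum_mul_left]
    rw [hV]
    ring
  -- U = c1*T + c2*V
  set c1 : ℂ := (q - a) / (a * (q - 1)) with hc1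
  set c2 : ℂ := q * (a - 1) / (a * (q - 1)) with hc2
  have hU : (∑' m : ℕ, (-a) ^ m * (1 - q * q ^ m)
        / ((1 - a * q ^ m) * (1 - a * (q * q ^ m))))
      = c1 * T + c2 * V := by
    have he : ∀ m : ℕ, (-a) ^ m * (1 - q * q ^ m)
          / ((1 - a * q ^ m) * (1 - a * (q * q ^ m)))
        = c1 * ((-a) ^ m / (1 - a * q ^ m)) + c2 * ((-a) ^ m / (1 - a * (q * q ^ m))) := by
      intro m
      have hd1 : (1 : ℂ) - a * q ^ m ≠ 0 := one_sub_mul_pow_ne hq' ha m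
      have hd2 : (1 : ℂ) - a * (q * q ^ m) ≠ 0 := by
        have h := one_sub_mul_pow_ne hq' ha (m + 1)
        rw [show a * (q * q ^ m) = a * q ^ (m + 1) by rw [pow_succ']]
        exact h
      have hd2' : (1 : ℂ) - a * q * q ^ m ≠ 0 := by
        rw [mul_assoc]; exact hd2
      rw [hc1, hc2]
      field_simp
      ring
    rw [tsum_congr he, Summable.tsum_add (hTsum.mul_left c1) (hVsum.mul_left c2),
      tsum_mul_left, tsum_mul_left, ← hT, ← hV]
  have hU' : a * (q - 1) * (∑' m : ℕ, (-a) ^ m * (1 - q * q ^ m)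
        / ((1 - a * q ^ m) * (1 - a * (q * q ^ m))))
      = (q - a) * T + q * (a - 1) * V := by
    rw [hU, hc1, hc2]
    field_simp
  have hTV' : (1 - a) * T = 1 - a * (1 - a) * V := by
    rw [hTV]
    field_simp
  have hG : a * q * ((1 + lam ^ 2) * T - lam ^ 2 * (1 - q)
      * (∑' m : ℕ, (-a) ^ m * (1 - q * q ^ m)
        / ((1 - a * q ^ m) * (1 - a * (q * q ^ m))))) = a * q * 1 := by
    linear_combination (lam ^ 2 * q) * hU' + (q * T + q * (a - 1) * V) * hrel
      + (a * q) * hTV'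
  exact mul_left_cancel₀ (mul_ne_zero ha0 hq0) hG

end QSec

open QSec in
theorem closedForm_qSecant (q lam μ : ℂ) (hq : ‖q‖ < 1)
    (hlam0 : 0 < ‖lam‖) (hlam1 : ‖lam‖ < 1)
    (hlam2 : 1 + lam ^ 2 ≠ 0) (hμ : μ ^ 2 = q)
    (hpsi : psi q lam q ≠ 0)
    (hne : (1 + lam ^ 2) * psi q lam q ≠ lam ^ 2 * (1 - q) * psi q lam (q ^ 2)) :
    (Summable fun k : ℕ => ‖(-(I * lam * μ)) ^ k / (1 - I * lam * μ * q ^ k)‖) ∧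
    1 / (1 - lam ^ 2 * (1 - q) * psi q lam (q ^ 2) / ((1 + lam ^ 2) * psi q lam q))
      = (1 + lam ^ 2) * ∑' k : ℕ, (-(I * lam * μ)) ^ k / (1 - I * lam * μ * q ^ k) := by
  have hq' : ‖q‖ < 1 := hq
  have hμnorm : ‖μ‖ < 1 := by
    have h1 : ‖μ‖ ^ 2 = ‖q‖ := by rw [← norm_pow, hμ]
    nlinarith [norm_nonneg μ]
  have ha : ‖I * lam * μ‖ < 1 := by
    rw [norm_mul, norm_mul, Complex.norm_I, one_mul] at *
    nlinarith [norm_nonneg lam, norm_nonneg μ]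
  constructor
  · -- summability of norms
    refine Summable.of_nonneg_of_le (fun k => norm_nonneg _)
      (fun k => ?_) ((summable_geometric_of_lt_one (norm_nonneg (I * lam * μ)) ha).mul_left
        ((1 - ‖I * lam * μ‖)⁻¹))
    set b : ℂ := I * lam * μ with hb
    rw [norm_div, norm_pow, norm_neg]
    have h1 : 1 - ‖b‖ ≤ ‖1 - b * q ^ k‖ := norm_one_sub_ge (norm_mul_pow_le (le_of_lt hq') k)
    have h2 : (0:ℝ) < 1 - ‖b‖ := by linarith
    rw [div_le_iff₀ (lt_of_lt_of_le h2 h1)]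
    calc ‖b‖ ^ k = (1 - ‖b‖)⁻¹ * ‖b‖ ^ k * (1 - ‖b‖) := by
          rw [eq_comm, mul_comm, ← mul_assoc, mul_inv_cancel₀ (ne_of_gt h2), one_mul]
      _ ≤ (1 - ‖b‖)⁻¹ * ‖b‖ ^ k * ‖1 - b * q ^ k‖ := by
          refine mul_le_mul_of_nonneg_left h1 (by positivity)
  · by_cases hq0 : q = 0
    · -- degenerate case q = 0
      subst hq0
      have hμ0 : μ = 0 := by
        have := hμ
        rwa [pow_eq_zero_iff (by norm_num)] at this
      subst hμ0
      have hψ1 : psi 0 lam 0 = 1 := by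
        rw [psi]
        rw [tsum_eq_single 0 (by intro b hb; simp [qPoch, zero_pow hb])]
        simp [qPoch]
      have hψ2 : psi 0 lam (0 ^ 2) = 1 := by
        rw [show (0:ℂ)^2 = 0 by norm_num, hψ1]
      have hsum : (∑' k : ℕ, (-(I * lam * 0)) ^ k / (1 - I * lam * 0 * 0 ^ k)) = 1 := by
        rw [tsum_eq_single 0 (by intro b hb; simp [zero_pow hb])]
        simp
      rw [hψ1, hψ2, hsum]
      have hd : (1:ℂ) + lam ^ 2 ≠ 0 := hlam2
      field_simp
      ring
    · -- main case
      set a : ℂ := I * lam * μ with ha_def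
      have hμ0 : μ ≠ 0 := fun h => hq0 (by rw [← hμ, h]; ring)
      have hlamne : lam ≠ 0 := by
        intro h
        rw [h] at hlam0
        simp at hlam0
      have ha0 : a ≠ 0 := by
        rw [ha_def]
        exact mul_ne_zero (mul_ne_zero Complex.I_ne_zero hlamne) hμ0
      have ha2 : a ^ 2 = -(lam ^ 2 * q) := by
        rw [ha_def, mul_pow, mul_pow, Complex.I_sq, hμ]
        ring
      -- translate psi to the a-form
      have hsummand : ∀ (x : ℂ) (k : ℕ),
          qPoch (-(lam ^ 2 * q)) (q ^ 2) k * x ^ k / (qPoch q q k * qPoch (lam ^ 2 * q) q k)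
            = qPoch a q k * qPoch (-a) q k * x ^ k
              / (qPoch q q k * qPoch (-(a ^ 2)) q k) := by
        intro x k
        rw [show -(lam ^ 2 * q) = a ^ 2 from ha2.symm]
        rw [show lam ^ 2 * q = -(a ^ 2) by rw [ha2, neg_neg]]
        rw [qPoch_sq]
      have hψ1 : psi q lam q = ∑' n : ℕ, qPoch a q n * qPoch (-a) q n * q ^ n
          / (qPoch q q n * qPoch (-(a ^ 2)) q n) := by
        unfold psi
        exact tsum_congr fun k => hsummand q k
      have hψ2 : psi q lam (q ^ 2) = ∑' n : ℕ, qPoch a q n * qPoch (-a) q n * (q ^ 2) ^ n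
          / (qPoch q q n * qPoch (-(a ^ 2)) q n) := by
        unfold psi
        exact tsum_congr fun k => hsummand (q ^ 2) k
      have hA := Apr (a := a) hq' ha
      have hB := Bpr (a := a) hq' ha
      have halg := alg (lam := lam) hq' ha ha0 hq0 ha2
      have hHne := Hf_neg_ne_zero (a := a) hq' ha
      set T : ℂ := ∑' m : ℕ, (-a) ^ m / (1 - a * q ^ m) with hTdef
      set U : ℂ := ∑' m : ℕ, (-a) ^ m * (1 - q * q ^ m)
          / ((1 - a * q ^ m) * (1 - a * (q * q ^ m))) with hUdef
      set D : ℂ := (1 + lam ^ 2) * psi q lam q - lam ^ 2 * (1 - q) * psi q lam (q ^ 2) with hDdef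
      rw [← hψ1] at hA
      rw [← hψ2] at hB
      have hDH : D * Hf a q (-a) = Hf a q q * (1 - a) := by
        have e : D * Hf a q (-a)
            = Hf a q q * (1 - a) * ((1 + lam ^ 2) * T - lam ^ 2 * (1 - q) * U) := by
          rw [hDdef]
          linear_combination (1 + lam ^ 2) * hA - lam ^ 2 * (1 - q) * hB
        rw [e, halg, mul_one]
      have hψD : psi q lam q = D * T := by
        have h1 : psi q lam q * Hf a q (-a) = (D * T) * Hf a q (-a) := by
          calc psi q lam q * Hf a q (-a) = Hf a q q * ((1 - a) * T) := hA
            _ = (Hf a q q * (1 - a)) * T := by ring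
            _ = (D * Hf a q (-a)) * T := by rw [hDH]
            _ = (D * T) * Hf a q (-a) := by ring
        exact mul_right_cancel₀ hHne h1
      have hDne : D ≠ 0 := sub_ne_zero.mpr hne
      have h2 : (1 + lam ^ 2) * psi q lam q ≠ 0 := mul_ne_zero hlam2 hpsi
      have hden : 1 - lam ^ 2 * (1 - q) * psi q lam (q ^ 2) / ((1 + lam ^ 2) * psi q lam q)
          = D / ((1 + lam ^ 2) * psi q lam q) := by
        rw [hDdef]
        field_simp
      rw [hden, one_div_div, hψD, mul_div_assoc]
      rw [mul_div_cancel_left₀ _ hDne]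
end

section
/- Let q, λ ∈ ℂ with |q| < 1, λ ≠ 0, and suppose λ²q^k ≠ 1 and λ² ≠ q^k for all integers k ≥ 1. Write λ̄ = 1/λ. Then (1 + λ²) [φ(λ,q³) φ(λ̄,q⁴) − λ² φ(λ̄,q³) φ(λ,q⁴)] = (1 − q²) [φ(λ,q²) φ(λ̄,q⁴) − λ⁴ φ(λ̄,q²) φ(λ,q⁴)]. -/
open Filter Topology

/-- Coefficient of the series. -/
noncomputable def cc (q lam : ℂ) (k : ℕ) : ℂ :=
  qPoch (-lam ^ 2) (q ^ 2) k / (qPoch q q k * qPoch (lam ^ 2 * q) q k)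

lemma phi_eq (q lam x : ℂ) : phi q lam x = ∑' k : ℕ, cc q lam k * x ^ k := by
  refine tsum_congr fun k => ?_
  rw [cc]; ring

lemma one_sub_q_pow_ne (q : ℂ) (hq : ‖q‖ < 1) (k : ℕ) : (1 : ℂ) - q * q ^ k ≠ 0 := by
  have h : ‖q * q ^ k‖ < 1 := by
    rw [norm_mul, norm_pow]
    calc ‖q‖ * ‖q‖ ^ k ≤ ‖q‖ * 1 := by
          refine mul_le_mul_of_nonneg_left ?_ (norm_nonneg q)
          exact pow_le_one₀ (norm_nonneg q) hq.le
      _ < 1 := by simpa using hq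
  intro h0
  have : q * q ^ k = 1 := by linear_combination -h0
  rw [this] at h; simp at h

lemma qPoch_q_ne_zero (q : ℂ) (hq : ‖q‖ < 1) (k : ℕ) : qPoch q q k ≠ 0 := by
  rw [qPoch]
  exact Finset.prod_ne_zero_iff.2 fun j _ => one_sub_q_pow_ne q hq j

lemma qPoch_lam_ne_zero (q lam : ℂ) (h1 : ∀ k : ℕ, 1 ≤ k → lam ^ 2 * q ^ k ≠ 1) (k : ℕ) :
    qPoch (lam ^ 2 * q) q k ≠ 0 := by
  rw [qPoch]
  refine Finset.prod_ne_zero_iff.2 fun j _ => ?_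
  have h := h1 (j + 1) (Nat.le_add_left 1 j)
  intro h0
  apply h
  have : lam ^ 2 * q * q ^ j = 1 := by linear_combination -h0
  rw [← this]; ring

lemma cc_rec (q lam : ℂ) (hq : ‖q‖ < 1) (h1 : ∀ k : ℕ, 1 ≤ k → lam ^ 2 * q ^ k ≠ 1) (k : ℕ) :
    (1 - q * q ^ k) * (1 - lam ^ 2 * q * q ^ k) * cc q lam (k + 1)
      = (1 + lam ^ 2 * (q ^ 2) ^ k) * cc q lam k := by
  have hQ := qPoch_q_ne_zero q hq k
  have hR := qPoch_lam_ne_zero q lam h1 k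
  have hq1 := one_sub_q_pow_ne q hq k
  have hl1 : (1 : ℂ) - lam ^ 2 * q * q ^ k ≠ 0 := by
    intro h0
    apply h1 (k + 1) (Nat.le_add_left 1 k)
    have : lam ^ 2 * q * q ^ k = 1 := by linear_combination -h0
    rw [← this]; ring
  rw [cc, cc, qPoch, qPoch, qPoch, Finset.prod_range_succ, Finset.prod_range_succ,
    Finset.prod_range_succ, ← qPoch, ← qPoch, ← qPoch]
  generalize qPoch (lam ^ 2 * q) q k = R at hR ⊢
  generalize lam ^ 2 * q * q ^ k = L at hl1 ⊢
  field_simp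
  ring

lemma cc_summable (q lam x : ℂ) (hq : ‖q‖ < 1)
    (h1 : ∀ k : ℕ, 1 ≤ k → lam ^ 2 * q ^ k ≠ 1) (hx : ‖x‖ < 1) :
    Summable (fun k : ℕ => cc q lam k * x ^ k) := by
  set r : ℝ := (‖x‖ + 1) / 2 with hr
  have hxr : ‖x‖ < r := by rw [hr]; linarith
  have hr1 : r < 1 := by rw [hr]; linarith
  refine summable_of_ratio_norm_eventually_le hr1 ?_
  have ht1 : Tendsto (fun k : ℕ => ‖x‖ * ‖1 + lam ^ 2 * (q ^ 2) ^ k‖) atTop (𝓝 (‖x‖ * 1)) := by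
    refine Tendsto.const_mul _ ?_
    have h2 : Tendsto (fun k : ℕ => (1 : ℂ) + lam ^ 2 * (q ^ 2) ^ k) atTop (𝓝 (1 + lam ^ 2 * 0)) := by
      refine Tendsto.const_add _ (Tendsto.const_mul _ ?_)
      exact tendsto_pow_atTop_nhds_zero_of_norm_lt_one (by rw [norm_pow]; nlinarith [norm_nonneg q])
    simpa using h2.norm
  have hq0 : Tendsto (fun k : ℕ => q * q ^ k) atTop (𝓝 (q * 0)) :=
    Tendsto.const_mul _ (tendsto_pow_atTop_nhds_zero_of_norm_lt_one hq)
  have ht2 : Tendsto (fun k : ℕ => r * (‖1 - q * q ^ k‖ * ‖1 - lam ^ 2 * q * q ^ k‖)) atTop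
      (𝓝 (r * (1 * 1))) := by
    refine Tendsto.const_mul _ (Tendsto.mul ?_ ?_)
    · have := ((tendsto_const_nhds (x := (1 : ℂ))).sub hq0).norm
      simpa using this
    · have h3 : Tendsto (fun k : ℕ => lam ^ 2 * q * q ^ k) atTop (𝓝 (lam ^ 2 * (q * 0))) := by
        simpa [mul_assoc] using hq0.const_mul (lam ^ 2)
      have := ((tendsto_const_nhds (x := (1 : ℂ))).sub h3).norm
      simpa using this
  have hev := Filter.Tendsto.eventually_lt ht1 ht2 (by simpa using hxr)
  filter_upwards [hev] with k hkey
  have hrec := cc_rec q lam hq h1 k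
  have hq1 := one_sub_q_pow_ne q hq k
  have hl1 : (1 : ℂ) - lam ^ 2 * q * q ^ k ≠ 0 := by
    intro h0
    apply h1 (k + 1) (Nat.le_add_left 1 k)
    have : lam ^ 2 * q * q ^ k = 1 := by linear_combination -h0
    rw [← this]; ring
  have hD : 0 < ‖(1:ℂ) - q * q ^ k‖ * ‖(1:ℂ) - lam ^ 2 * q * q ^ k‖ :=
    mul_pos (norm_pos_iff.2 hq1) (norm_pos_iff.2 hl1)
  have hE : ‖cc q lam (k + 1) * x ^ (k + 1)‖ * (‖(1:ℂ) - q * q ^ k‖ * ‖(1:ℂ) - lam ^ 2 * q * q ^ k‖)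
      = ‖cc q lam k * x ^ k‖ * (‖x‖ * ‖(1:ℂ) + lam ^ 2 * (q ^ 2) ^ k‖) := by
    have h := congrArg norm hrec
    simp only [norm_mul] at h
    set n1 := ‖(1:ℂ) - q * q ^ k‖
    set n2 := ‖(1:ℂ) - lam ^ 2 * q * q ^ k‖
    set n3 := ‖(1:ℂ) + lam ^ 2 * (q ^ 2) ^ k‖
    simp only [norm_mul, norm_pow, pow_succ]
    linear_combination (‖x‖ ^ k * ‖x‖) * h
  have hN : (0:ℝ) ≤ ‖cc q lam k * x ^ k‖ := norm_nonneg _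
  have hle : ‖cc q lam (k + 1) * x ^ (k + 1)‖
        * (‖(1:ℂ) - q * q ^ k‖ * ‖(1:ℂ) - lam ^ 2 * q * q ^ k‖)
      ≤ (r * ‖cc q lam k * x ^ k‖)
        * (‖(1:ℂ) - q * q ^ k‖ * ‖(1:ℂ) - lam ^ 2 * q * q ^ k‖) := by
    rw [hE]
    calc ‖cc q lam k * x ^ k‖ * (‖x‖ * ‖(1:ℂ) + lam ^ 2 * (q ^ 2) ^ k‖)
        ≤ ‖cc q lam k * x ^ k‖ * (r * (‖(1:ℂ) - q * q ^ k‖ * ‖(1:ℂ) - lam ^ 2 * q * q ^ k‖)) :=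
          mul_le_mul_of_nonneg_left hkey.le hN
      _ = (r * ‖cc q lam k * x ^ k‖)
            * (‖(1:ℂ) - q * q ^ k‖ * ‖(1:ℂ) - lam ^ 2 * q * q ^ k‖) := by ring
  exact le_of_mul_le_mul_right hle hD

lemma phi_rec (q lam x : ℂ) (hq : ‖q‖ < 1)
    (h1 : ∀ k : ℕ, 1 ≤ k → lam ^ 2 * q ^ k ≠ 1) (hx : ‖x‖ < 1) :
    (1 - x) * phi q lam x - (1 + lam ^ 2) * phi q lam (q * x)
      + lam ^ 2 * (1 - x) * phi q lam (q ^ 2 * x) = 0 := by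
  have hqx : ‖q * x‖ < 1 := by
    rw [norm_mul]; nlinarith [norm_nonneg q, norm_nonneg x]
  have hq2x : ‖q ^ 2 * x‖ < 1 := by
    rw [norm_mul, norm_pow]; nlinarith [norm_nonneg q, norm_nonneg x]
  have S1 := cc_summable q lam x hq h1 hx
  have S2 := cc_summable q lam (q * x) hq h1 hqx
  have S3 := cc_summable q lam (q ^ 2 * x) hq h1 hq2x
  set f : ℕ → ℂ := fun k => cc q lam k * x ^ k with hf
  set g : ℕ → ℂ := fun k => cc q lam k * (q * x) ^ k with hg
  set h : ℕ → ℂ := fun k => cc q lam k * (q ^ 2 * x) ^ k with hh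
  set A : ℕ → ℂ := fun k => (1 - q ^ k) * (1 - lam ^ 2 * q ^ k) * cc q lam k * x ^ k with hA
  set B : ℕ → ℂ := fun k => (1 + lam ^ 2 * (q ^ 2) ^ k) * cc q lam k * x ^ k * x with hB
  have hAeq : A = fun k => f k - (1 + lam ^ 2) * g k + lam ^ 2 * h k := by
    funext k; simp only [hA, hf, hg, hh]; ring
  have hBeq : B = fun k => x * f k + lam ^ 2 * x * h k := by
    funext k; simp only [hB, hf, hh]; ring
  have SA : Summable A := by
    rw [hAeq]; exact (S1.sub (S2.mul_left _)).add (S3.mul_left _)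
  have SB : Summable B := by
    rw [hBeq]; exact (S1.mul_left _).add (S3.mul_left _)
  have key : ∑' k, A k = ∑' k, B k := by
    rw [Summable.tsum_eq_zero_add SA]
    have hA0 : A 0 = 0 := by simp [hA]
    rw [hA0, zero_add]
    refine tsum_congr fun k => ?_
    have hrec := cc_rec q lam hq h1 k
    simp only [hA, hB]
    linear_combination x ^ (k + 1) * hrec
  rw [phi_eq, phi_eq, phi_eq, ← tsum_mul_left, ← tsum_mul_left, ← tsum_mul_left]
  rw [← Summable.tsum_sub (S1.mul_left _) (S2.mul_left _),
    ← Summable.tsum_add ((S1.mul_left _).sub (S2.mul_left _)) (S3.mul_left _)]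
  have : ∀ k : ℕ, (1 - x) * f k - (1 + lam ^ 2) * g k + lam ^ 2 * (1 - x) * h k = A k - B k := by
    intro k; simp only [hA, hB, hf, hg, hh]; ring
  rw [tsum_congr this, Summable.tsum_sub SA SB, key, sub_self]

theorem identity_w1_qTangent (q lam : ℂ) (hq : ‖q‖ < 1) (hlam : lam ≠ 0)
    (hk : ∀ k : ℕ, 1 ≤ k → lam ^ 2 * q ^ k ≠ 1 ∧ lam ^ 2 ≠ q ^ k) :
    (1 + lam ^ 2) *
        (phi q lam (q ^ 3) * phi q (1 / lam) (q ^ 4)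
          - lam ^ 2 * phi q (1 / lam) (q ^ 3) * phi q lam (q ^ 4))
      = (1 - q ^ 2) *
          (phi q lam (q ^ 2) * phi q (1 / lam) (q ^ 4)
            - lam ^ 4 * phi q (1 / lam) (q ^ 2) * phi q lam (q ^ 4)) := by
  have hq' : ‖q‖ < 1 := hq
  have hq2 : ‖q ^ 2‖ < 1 := by
    rw [norm_pow]; nlinarith [norm_nonneg q]
  have h1 : ∀ k : ℕ, 1 ≤ k → lam ^ 2 * q ^ k ≠ 1 := fun k hk' => (hk k hk').1
  have h1' : ∀ k : ℕ, 1 ≤ k → (1 / lam) ^ 2 * q ^ k ≠ 1 := by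
    intro k hk' h0
    apply (hk k hk').2
    field_simp at h0
    rw [h0]
  have e1 := phi_rec q lam (q ^ 2) hq' h1 hq2
  have e2 := phi_rec q (1 / lam) (q ^ 2) hq' h1' hq2
  rw [show q * q ^ 2 = q ^ 3 by ring, show q ^ 2 * q ^ 2 = q ^ 4 by ring] at e1 e2
  have e2' : lam ^ 2 * (1 - q ^ 2) * phi q (1 / lam) (q ^ 2)
      - (1 + lam ^ 2) * phi q (1 / lam) (q ^ 3)
      + (1 - q ^ 2) * phi q (1 / lam) (q ^ 4) = 0 := by
    have hl2 : (lam : ℂ) ^ 2 ≠ 0 := pow_ne_zero _ hlam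
    field_simp at e2
    linear_combination e2
  linear_combination (-(phi q (1 / lam) (q ^ 4))) * e1
    + (lam ^ 2 * phi q lam (q ^ 4)) * e2'
end

section
/- Let q, λ ∈ ℂ with |q| < 1, λ ≠ 0, and suppose λ²q^k ≠ 1 and λ² ≠ q^k for all integers k ≥ 1. Write λ̄ = 1/λ. Then (1 + λ²) [ψ(λ,q²) ψ(λ̄,q³) − λ² ψ(λ̄,q²) ψ(λ,q³)] = (1 − q) [ψ(λ,q) ψ(λ̄,q³) − λ⁴ ψ(λ̄,q) ψ(λ,q³)]. -/
open Filter Finset Topology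

namespace QSecAux

/-- The coefficient `a_k` of the series `ψ`. -/
noncomputable def ac (q lam : ℂ) (k : ℕ) : ℂ :=
  qPoch (-(lam ^ 2 * q)) (q ^ 2) k / (qPoch q q k * qPoch (lam ^ 2 * q) q k)

lemma psi_eq (q lam x : ℂ) : psi q lam x = ∑' k : ℕ, ac q lam k * x ^ k := by
  unfold psi ac
  congr 1
  funext k
  rw [mul_div_right_comm]

lemma one_sub_mul_pow_ne (q : ℂ) (hq : ‖q‖ < 1) (j : ℕ) :
    (1 : ℂ) - q * q ^ j ≠ 0 := by
  intro h
  have h1 : q * q ^ j = 1 := by linear_combination -h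
  have h2 : ‖q * q ^ j‖ < 1 := by
    rw [norm_mul, norm_pow]
    calc ‖q‖ * ‖q‖ ^ j ≤ ‖q‖ * 1 :=
          mul_le_mul_of_nonneg_left
            (pow_le_one₀ (norm_nonneg _) hq.le) (norm_nonneg _)
      _ = ‖q‖ := mul_one _
      _ < 1 := hq
  rw [h1] at h2
  simp at h2

lemma qPoch_q_ne (q : ℂ) (hq : ‖q‖ < 1) (k : ℕ) : qPoch q q k ≠ 0 := by
  unfold qPoch
  exact Finset.prod_ne_zero_iff.2 fun j _ => one_sub_mul_pow_ne q hq j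

lemma qPoch_lam_ne (q lam : ℂ) (hk1 : ∀ m : ℕ, 1 ≤ m → lam ^ 2 * q ^ m ≠ 1) (k : ℕ) :
    qPoch (lam ^ 2 * q) q k ≠ 0 := by
  unfold qPoch
  refine Finset.prod_ne_zero_iff.2 fun j _ => ?_
  intro h
  apply hk1 (j + 1) (Nat.le_add_left 1 j)
  calc lam ^ 2 * q ^ (j + 1) = lam ^ 2 * q * q ^ j := by ring
    _ = 1 := by linear_combination -h

lemma one_sub_lam_ne (q lam : ℂ) (hk1 : ∀ m : ℕ, 1 ≤ m → lam ^ 2 * q ^ m ≠ 1) (k : ℕ) :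
    (1 : ℂ) - lam ^ 2 * q * q ^ k ≠ 0 := by
  intro h
  apply hk1 (k + 1) (Nat.le_add_left 1 k)
  calc lam ^ 2 * q ^ (k + 1) = lam ^ 2 * q * q ^ k := by ring
    _ = 1 := by linear_combination -h

lemma ac_succ (q lam : ℂ) (hq : ‖q‖ < 1)
    (hk1 : ∀ m : ℕ, 1 ≤ m → lam ^ 2 * q ^ m ≠ 1) (k : ℕ) :
    ac q lam (k + 1) * ((1 - q * q ^ k) * (1 - lam ^ 2 * q * q ^ k))
      = ac q lam k * (1 + lam ^ 2 * q * (q ^ 2) ^ k) := by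
  have h1' := qPoch_q_ne q hq k
  have h2' := qPoch_lam_ne q lam hk1 k
  have hA := one_sub_mul_pow_ne q hq k
  have hB := one_sub_lam_ne q lam hk1 k
  unfold ac qPoch
  rw [Finset.prod_range_succ, Finset.prod_range_succ, Finset.prod_range_succ]
  unfold qPoch at h1' h2'
  rw [div_mul_eq_mul_div,
    div_eq_iff (mul_ne_zero (mul_ne_zero h1' hA) (mul_ne_zero h2' hB)), div_mul_eq_mul_div,
    div_mul_eq_mul_div, eq_div_iff (mul_ne_zero h1' h2')]
  ring

lemma ac_ne (q lam : ℂ) (hq : ‖q‖ < 1)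
    (hk1 : ∀ m : ℕ, 1 ≤ m → lam ^ 2 * q ^ m ≠ 1)
    (hz : ∀ j : ℕ, (1 : ℂ) + lam ^ 2 * q * (q ^ 2) ^ j ≠ 0) (k : ℕ) :
    ac q lam k ≠ 0 := by
  unfold ac
  apply div_ne_zero
  · unfold qPoch
    refine Finset.prod_ne_zero_iff.2 fun j _ => ?_
    intro h
    apply hz j
    linear_combination h
  · exact mul_ne_zero (qPoch_q_ne q hq k) (qPoch_lam_ne q lam hk1 k)

lemma summable_ac (q lam x : ℂ) (hq : ‖q‖ < 1)
    (hk1 : ∀ m : ℕ, 1 ≤ m → lam ^ 2 * q ^ m ≠ 1)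
    (hx : ‖x‖ < 1) (hx0 : x ≠ 0) :
    Summable (fun k : ℕ => ac q lam k * x ^ k) := by
  by_cases hz : ∃ j : ℕ, (1 : ℂ) + lam ^ 2 * q * (q ^ 2) ^ j = 0
  · obtain ⟨j, hj⟩ := hz
    apply summable_of_ne_finset_zero (s := Finset.range (j + 1))
    intro k hk
    have hjk : j < k := by
      by_contra h
      exact hk (Finset.mem_range.mpr (by omega))
    have hz2 : qPoch (-(lam ^ 2 * q)) (q ^ 2) k = 0 := by
      unfold qPoch
      apply Finset.prod_eq_zero (Finset.mem_range.mpr hjk)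
      linear_combination hj
    simp [ac, hz2]
  · push_neg at hz
    have hne : ∀ k : ℕ, ac q lam k * x ^ k ≠ 0 := fun k =>
      mul_ne_zero (ac_ne q lam hq hk1 hz k) (pow_ne_zero k hx0)
    apply summable_of_ratio_test_tendsto_lt_one hx (Eventually.of_forall hne)
    have hrat : ∀ n : ℕ, ac q lam (n + 1) * x ^ (n + 1)
        = (ac q lam n * x ^ n) *
          (x * (1 + lam ^ 2 * q * (q ^ 2) ^ n) /
            ((1 - q * q ^ n) * (1 - lam ^ 2 * q * q ^ n))) := by
      intro n
      have hd1 := one_sub_mul_pow_ne q hq n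
      have hd2 : (1 : ℂ) - lam ^ 2 * q * q ^ n ≠ 0 := by
        intro h
        apply hk1 (n + 1) (Nat.le_add_left 1 n)
        calc lam ^ 2 * q ^ (n + 1) = lam ^ 2 * q * q ^ n := by ring
          _ = 1 := by linear_combination -h
      have hrec := ac_succ q lam hq hk1 n
      field_simp
      linear_combination x ^ n * x * hrec
    have hq2 : Tendsto (fun n : ℕ => ((q : ℂ) ^ 2) ^ n) atTop (𝓝 0) := by
      apply tendsto_pow_atTop_nhds_zero_of_norm_lt_one
      have he : ‖(q : ℂ) ^ 2‖ = ‖q‖ ^ 2 := by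
        rw [norm_pow]
      rw [he]
      calc ‖q‖ ^ 2 ≤ ‖q‖ ^ 1 :=
            pow_le_pow_of_le_one (norm_nonneg _) hq.le (by norm_num)
        _ = ‖q‖ := pow_one _
        _ < 1 := hq
    have hq1 : Tendsto (fun n : ℕ => (q : ℂ) ^ n) atTop (𝓝 0) := by
      apply tendsto_pow_atTop_nhds_zero_of_norm_lt_one
      exact hq
    have hcn : Tendsto (fun n : ℕ =>
        x * (1 + lam ^ 2 * q * (q ^ 2) ^ n) /
          ((1 - q * q ^ n) * (1 - lam ^ 2 * q * q ^ n))) atTop (𝓝 x) := by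
      have hA : Tendsto (fun n : ℕ => x * (1 + lam ^ 2 * q * (q ^ 2) ^ n)) atTop
          (𝓝 (x * (1 + lam ^ 2 * q * 0))) :=
        tendsto_const_nhds.mul (tendsto_const_nhds.add (tendsto_const_nhds.mul hq2))
      have hB : Tendsto (fun n : ℕ => (1 - q * q ^ n) * (1 - lam ^ 2 * q * q ^ n)) atTop
          (𝓝 ((1 - q * 0) * (1 - lam ^ 2 * q * 0))) :=
        (tendsto_const_nhds.sub (tendsto_const_nhds.mul hq1)).mul
          (tendsto_const_nhds.sub (tendsto_const_nhds.mul hq1))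
      have hAB := hA.div hB (by norm_num)
      simpa [Pi.div_def] using hAB
    have habs : Tendsto (fun n : ℕ => ‖x * (1 + lam ^ 2 * q * (q ^ 2) ^ n) /
        ((1 - q * q ^ n) * (1 - lam ^ 2 * q * q ^ n))‖) atTop (𝓝 ‖x‖) := hcn.norm
    have hnorm : ‖x‖ = ‖x‖ := rfl
    rw [hnorm] at habs
    apply habs.congr
    intro n
    rw [hrat n, norm_mul, mul_div_cancel_left₀ _ (norm_ne_zero_iff.mpr (hne n))]

lemma abs_pow_lt_one (q : ℂ) (hq : ‖q‖ < 1) (m : ℕ) (hm : 1 ≤ m) :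
    ‖q ^ m‖ < 1 := by
  rw [norm_pow]
  calc ‖q‖ ^ m ≤ ‖q‖ ^ 1 :=
        pow_le_pow_of_le_one (norm_nonneg _) hq.le hm
    _ = ‖q‖ := pow_one _
    _ < 1 := hq

/-- The key three-term relation `(1+λ²)ψ(λ,q²) = (1−q)ψ(λ,q) + λ²(1−q²)ψ(λ,q³)`. -/
lemma key (q lam : ℂ) (hq : ‖q‖ < 1)
    (hk1 : ∀ m : ℕ, 1 ≤ m → lam ^ 2 * q ^ m ≠ 1) :
    (1 + lam ^ 2) * psi q lam (q ^ 2)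
      = (1 - q) * psi q lam q + lam ^ 2 * (1 - q ^ 2) * psi q lam (q ^ 3) := by
  rcases eq_or_ne q 0 with h0 | hq0
  · subst h0
    have hpsi : psi 0 lam 0 = 1 := by
      unfold psi
      rw [tsum_eq_single 0]
      · simp [qPoch]
      · intro k hk
        simp [zero_pow hk]
    have e2 : ((0 : ℂ) ^ 2) = 0 := by norm_num
    have e3 : ((0 : ℂ) ^ 3) = 0 := by norm_num
    rw [e2, e3, hpsi]
    ring
  · have S1 := summable_ac q lam q hq hk1 hq hq0
    have S2 := summable_ac q lam (q ^ 2) hq hk1 (abs_pow_lt_one q hq 2 (by norm_num))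
      (pow_ne_zero 2 hq0)
    have S3 := summable_ac q lam (q ^ 3) hq hk1 (abs_pow_lt_one q hq 3 (by norm_num))
      (pow_ne_zero 3 hq0)
    set a := ac q lam with ha
    have hsum : HasSum
        (fun k : ℕ => (1 + lam ^ 2) * (a k * (q ^ 2) ^ k) - (1 - q) * (a k * q ^ k)
          - lam ^ 2 * (1 - q ^ 2) * (a k * (q ^ 3) ^ k))
        ((1 + lam ^ 2) * (∑' k : ℕ, a k * (q ^ 2) ^ k)
          - (1 - q) * (∑' k : ℕ, a k * q ^ k)
          - lam ^ 2 * (1 - q ^ 2) * (∑' k : ℕ, a k * (q ^ 3) ^ k)) :=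
      ((S2.hasSum.mul_left _).sub (S1.hasSum.mul_left _)).sub (S3.hasSum.mul_left _)
    have hstep : ∀ k : ℕ, (1 + lam ^ 2) * (a k * (q ^ 2) ^ k) - (1 - q) * (a k * q ^ k)
        - lam ^ 2 * (1 - q ^ 2) * (a k * (q ^ 3) ^ k)
        = (a (k + 1) * q ^ (k + 1) * ((1 - q ^ (k + 1)) * (1 - lam ^ 2 * q ^ (k + 1))))
          - (a k * q ^ k * ((1 - q ^ k) * (1 - lam ^ 2 * q ^ k))) := by
      intro k
      have hrec := ac_succ q lam hq hk1 k
      linear_combination (-(q ^ k * q)) * hrec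
    have hzero : HasSum
        (fun k : ℕ => (1 + lam ^ 2) * (a k * (q ^ 2) ^ k) - (1 - q) * (a k * q ^ k)
          - lam ^ 2 * (1 - q ^ 2) * (a k * (q ^ 3) ^ k)) 0 := by
      rw [hsum.summable.hasSum_iff_tendsto_nat]
      have hps : ∀ n : ℕ,
          (∑ i ∈ Finset.range n, ((1 + lam ^ 2) * (a i * (q ^ 2) ^ i)
            - (1 - q) * (a i * q ^ i)
            - lam ^ 2 * (1 - q ^ 2) * (a i * (q ^ 3) ^ i)))
          = a n * q ^ n * ((1 - q ^ n) * (1 - lam ^ 2 * q ^ n)) := by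
        intro n
        rw [Finset.sum_congr rfl fun i _ => hstep i,
          Finset.sum_range_sub (fun k => a k * q ^ k * ((1 - q ^ k) * (1 - lam ^ 2 * q ^ k)))]
        norm_num
      rw [tendsto_congr hps]
      have h1 : Tendsto (fun n : ℕ => a n * q ^ n) atTop (𝓝 0) := S1.tendsto_atTop_zero
      have hq1 : Tendsto (fun n : ℕ => (q : ℂ) ^ n) atTop (𝓝 0) := by
        apply tendsto_pow_atTop_nhds_zero_of_norm_lt_one
        exact hq
      have h2 : Tendsto (fun n : ℕ => (1 - q ^ n) * (1 - lam ^ 2 * q ^ n)) atTop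
          (𝓝 ((1 - 0) * (1 - lam ^ 2 * 0))) :=
        (tendsto_const_nhds.sub hq1).mul
          (tendsto_const_nhds.sub (tendsto_const_nhds.mul hq1))
      have h12 := h1.mul h2
      simpa using h12
    have hmain := hsum.unique hzero
    rw [psi_eq, psi_eq, psi_eq]
    linear_combination hmain

end QSecAux

theorem identity_w1_qSecant (q lam : ℂ) (hq : ‖q‖ < 1) (hlam : lam ≠ 0)
    (hk : ∀ k : ℕ, 1 ≤ k → lam ^ 2 * q ^ k ≠ 1 ∧ lam ^ 2 ≠ q ^ k) :
    (1 + lam ^ 2) *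
        (psi q lam (q ^ 2) * psi q (1 / lam) (q ^ 3)
          - lam ^ 2 * psi q (1 / lam) (q ^ 2) * psi q lam (q ^ 3))
      = (1 - q) *
          (psi q lam q * psi q (1 / lam) (q ^ 3)
            - lam ^ 4 * psi q (1 / lam) q * psi q lam (q ^ 3)) := by
  have k1 := QSecAux.key q lam hq fun m hm => (hk m hm).1
  have hk2 : ∀ m : ℕ, 1 ≤ m → (1 / lam) ^ 2 * q ^ m ≠ 1 := by
    intro m hm h
    apply (hk m hm).2
    calc lam ^ 2 = lam ^ 2 * ((1 / lam) ^ 2 * q ^ m) := by rw [h, mul_one]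
      _ = (lam * (1 / lam)) ^ 2 * q ^ m := by ring
      _ = q ^ m := by rw [mul_one_div_cancel hlam]; ring
  have k2 := QSecAux.key q (1 / lam) hq hk2
  have hinv : (1 / lam) ^ 2 * lam ^ 2 = 1 := by
    field_simp
  have k2' : (lam ^ 2 + 1) * psi q (1 / lam) (q ^ 2)
      = lam ^ 2 * (1 - q) * psi q (1 / lam) q + (1 - q ^ 2) * psi q (1 / lam) (q ^ 3) := by
    linear_combination lam ^ 2 * k2
      + ((1 - q ^ 2) * psi q (1 / lam) (q ^ 3) - psi q (1 / lam) (q ^ 2)) * hinv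
  linear_combination psi q (1 / lam) (q ^ 3) * k1 - lam ^ 2 * psi q lam (q ^ 3) * k2'
end
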